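/- arXiv:1902.02936 — 4 statements merged into one kernel-verified Lean document; each statement's English description precedes it below -/
import Mathlib

section
/- Let p be a prime and let E ⊆ 𝔽_p^3 be nonempty with |E| ≤ p². Suppose there is a two-dimensional subspace P₀ of 𝔽_p^3 such that Ê(ξ) = 0 for every ξ ∈ P₀ \ {0}. Then |E| = p². -/
open Finset

/-- The character `x ↦ e^{2πi (x·a)/p}` on `𝔽_p^d`. -/
noncomputable def chr (p : ℕ) {d : ℕ} (a x : Fin d → ZMod p) : ℂ :=
  Complex.exp (2 * (Real.pi : ℂ) * Complex.I *
    ((ZMod.val (∑ i, x i * a i) : ℕ) : ℂ) / (p : ℂ))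

/-- `(E, A)` is a spectral pair: the characters `χ_a`, `a ∈ A`, restricted to `E`,
are pairwise orthogonal, span `L²(E)`, and are linearly independent, i.e. they
form an orthogonal basis of `L²(E)`. -/
def IsSpectralPair (p : ℕ) {d : ℕ} (E A : Finset (Fin d → ZMod p)) : Prop :=
  (∀ a ∈ A, ∀ b ∈ A, a ≠ b →
    ∑ x ∈ E, chr p a x * (starRingEnd ℂ) (chr p b x) = 0) ∧
  (∀ f : E → ℂ, ∃ c : A → ℂ, ∀ x : E, f x = ∑ a : A, c a * chr p a.1 x.1) ∧
  (∀ c : A → ℂ, (∀ x : E, ∑ a : A, c a * chr p a.1 x.1 = 0) → ∀ a, c a = 0)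

/-- `E` is a spectral set. -/
def IsSpectral (p : ℕ) {d : ℕ} (E : Finset (Fin d → ZMod p)) : Prop :=
  ∃ A, IsSpectralPair p E A

/-- `E` tiles `𝔽_p^d` by translation. -/
def Tiles (p : ℕ) {d : ℕ} (E : Finset (Fin d → ZMod p)) : Prop :=
  ∃ A : Finset (Fin d → ZMod p),
    ∀ x, (∑ a ∈ A, if x - a ∈ E then (1 : ℕ) else 0) = 1

/-- `E` determines the direction (one-dimensional subspace) `D`. -/
def Determines (p : ℕ) {d : ℕ} (E : Finset (Fin d → ZMod p))
    (D : Submodule (ZMod p) (Fin d → ZMod p)) : Prop :=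
  ∃ e₁ ∈ E, ∃ e₂ ∈ E, e₁ ≠ e₂ ∧ e₁ - e₂ ∈ D

/-- The Fourier transform of the indicator function of `E`. -/
noncomputable def ftE (p : ℕ) {d : ℕ} (E : Finset (Fin d → ZMod p))
    (ξ : Fin d → ZMod p) : ℂ :=
  ((p : ℂ) ^ d)⁻¹ * ∑ x ∈ E, Complex.exp (-(2 * (Real.pi : ℂ) * Complex.I *
    ((ZMod.val (∑ i, x i * ξ i) : ℕ) : ℂ) / (p : ℂ)))

/-- The orthogonal set `S^⊥ = {x : x · y = 0 for all y ∈ S}`. -/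
def perpSet (p : ℕ) {d : ℕ} (S : Submodule (ZMod p) (Fin d → ZMod p)) :
    Set (Fin d → ZMod p) :=
  {x | ∀ y ∈ S, ∑ i, x i * y i = 0}


noncomputable def zet (p : ℕ) : ℂ := Complex.exp (2 * Real.pi * Complex.I / p)

noncomputable def ech (p : ℕ) (z : ZMod p) : ℂ := zet p ^ z.val

lemma zet_prim (p : ℕ) (hp : p.Prime) : IsPrimitiveRoot (zet p) p := by
  simpa [zet] using Complex.isPrimitiveRoot_exp p hp.ne_zero

lemma zet_pow_mod (p : ℕ) (hp : p.Prime) (n : ℕ) : zet p ^ (n % p) = zet p ^ n := by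
  conv_rhs => rw [← Nat.mod_add_div n p, pow_add, pow_mul, (zet_prim p hp).pow_eq_one,
    one_pow, mul_one]

lemma ech_add (p : ℕ) (hp : p.Prime) (a b : ZMod p) :
    ech p (a + b) = ech p a * ech p b := by
  haveI : NeZero p := ⟨hp.ne_zero⟩
  rw [ech, ZMod.val_add, zet_pow_mod p hp, pow_add]; rfl

lemma ech_zero (p : ℕ) (hp : p.Prime) : ech p 0 = 1 := by
  haveI : NeZero p := ⟨hp.ne_zero⟩
  simp [ech]

lemma ech_neg (p : ℕ) (hp : p.Prime) (a : ZMod p) : ech p (-a) = (ech p a)⁻¹ := by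
  have h : ech p (-a) * ech p a = 1 := by
    rw [← ech_add p hp, neg_add_cancel, ech_zero p hp]
  exact eq_inv_of_mul_eq_one_left h

lemma ech_ne_one (p : ℕ) (hp : p.Prime) (a : ZMod p) (ha : a ≠ 0) : ech p a ≠ 1 := by
  haveI : NeZero p := ⟨hp.ne_zero⟩
  intro h
  have hd : p ∣ a.val := (zet_prim p hp).dvd_of_pow_eq_one _ h
  have : a.val = 0 := Nat.eq_zero_of_dvd_of_lt hd (ZMod.val_lt a)
  exact ha ((ZMod.val_eq_zero a).mp this)

lemma ech_eq_exp (p : ℕ) (w : ZMod p) :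
    ech p w = Complex.exp (2 * (Real.pi : ℂ) * Complex.I * ((w.val : ℕ) : ℂ) / (p : ℂ)) := by
  rw [ech, zet, ← Complex.exp_nat_mul]
  congr 1
  ring

lemma sum_ech_zero (p : ℕ) (hp : p.Prime) (P : Submodule (ZMod p) (Fin 3 → ZMod p))
    [Fintype P] (z : Fin 3 → ZMod p) (hz : ¬ ∀ ξ ∈ P, ∑ i, z i * ξ i = 0) :
    ∑ ξ : P, ech p (∑ i, z i * (ξ : Fin 3 → ZMod p) i) = 0 := by
  push_neg at hz
  obtain ⟨ξ₀, hξ₀P, hξ₀⟩ := hz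
  set c : ZMod p := ∑ i, z i * ξ₀ i with hc
  set S := ∑ ξ : P, ech p (∑ i, z i * (ξ : Fin 3 → ZMod p) i) with hS
  have key : S = ech p c * S := by
    rw [hS, Finset.mul_sum]
    refine (Fintype.sum_equiv (Equiv.addLeft (⟨ξ₀, hξ₀P⟩ : P)) _ _ ?_).symm
    intro ξ
    simp only [Equiv.coe_addLeft]
    have hdot : (∑ i, z i * ((⟨ξ₀, hξ₀P⟩ : P) + ξ : P).1 i)
        = c + ∑ i, z i * (ξ : Fin 3 → ZMod p) i := by
      rw [hc, ← Finset.sum_add_distrib]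
      refine Finset.sum_congr rfl fun i _ => ?_
      simp [mul_add]
    rw [hdot, ech_add p hp]
  have hzero : (ech p c - 1) * S = 0 := by linear_combination -key
  rcases mul_eq_zero.mp hzero with h1 | h2
  · exact absurd (sub_eq_zero.mp h1) (ech_ne_one p hp c hξ₀)
  · exact h2

/-- If `E ⊆ 𝔽_p^3` is nonempty with `|E| ≤ p²` and the Fourier transform of `E`
vanishes on the nonzero points of some two-dimensional subspace `P₀`,
then `|E| = p²`. -/
theorem card_eq_p_sq_of_vanishing_on_plane (p : ℕ) (hp : p.Prime)
    (E : Finset (Fin 3 → ZMod p)) (hne : E.Nonempty) (hcard : E.card ≤ p ^ 2)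
    (P₀ : Submodule (ZMod p) (Fin 3 → ZMod p))
    (hP₀ : Module.finrank (ZMod p) P₀ = 2)
    (hvanish : ∀ ξ : Fin 3 → ZMod p, ξ ∈ P₀ → ξ ≠ 0 → ftE p E ξ = 0) :
    E.card = p ^ 2 := by
  classical
  haveI : Fact p.Prime := ⟨hp⟩
  haveI : NeZero p := ⟨hp.ne_zero⟩
  obtain ⟨x₀, hx₀⟩ := hne
  have hp3 : ((p : ℂ) ^ 3)⁻¹ ≠ 0 := by
    simp [Nat.cast_ne_zero.mpr hp.ne_zero]
  -- cardinality of P₀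
  have hcardP : (Fintype.card P₀ : ℂ) = (p : ℂ) ^ 2 := by
    have h := Module.card_eq_pow_finrank (K := ZMod p) (V := P₀)
    rw [ZMod.card, hP₀] at h
    exact_mod_cast h
  -- Step A: the sum of ftE * ech over P₀ collapses to the term at 0
  have hS0 : ∑ ξ : P₀, ftE p E ξ * ech p (∑ i, x₀ i * (ξ : Fin 3 → ZMod p) i)
      = ((p : ℂ) ^ 3)⁻¹ * E.card := by
    rw [Fintype.sum_eq_single (⟨0, P₀.zero_mem⟩ : P₀)]
    · have h0 : ftE p E 0 = ((p : ℂ) ^ 3)⁻¹ * E.card := by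
        simp [ftE]
      have h1 : ech p (∑ i, x₀ i * ((⟨0, P₀.zero_mem⟩ : P₀) : Fin 3 → ZMod p) i) = 1 := by
        have : (∑ i, x₀ i * ((⟨0, P₀.zero_mem⟩ : P₀) : Fin 3 → ZMod p) i) = 0 := by simp
        rw [this, ech_zero p hp]
      rw [h1, mul_one]
      exact h0
    · rintro ⟨ξ, hξ⟩ hne'
      have hξ0 : ξ ≠ 0 := by simpa [Subtype.ext_iff] using hne'
      rw [hvanish ξ hξ hξ0, zero_mul]
  -- Step B: expand and swap sums
  have hexp : ∀ ξ : P₀, ftE p E ξ * ech p (∑ i, x₀ i * (ξ : Fin 3 → ZMod p) i)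
      = ((p : ℂ) ^ 3)⁻¹ *
        ∑ y ∈ E, ech p (∑ i, (x₀ - y) i * (ξ : Fin 3 → ZMod p) i) := by
    intro ξ
    rw [ftE, mul_assoc]
    congr 1
    rw [Finset.sum_mul]
    refine Finset.sum_congr rfl fun y _ => ?_
    have hneg : Complex.exp (-(2 * (Real.pi : ℂ) * Complex.I *
        ((ZMod.val (∑ i, y i * (ξ : Fin 3 → ZMod p) i) : ℕ) : ℂ) / (p : ℂ)))
        = ech p (-(∑ i, y i * (ξ : Fin 3 → ZMod p) i)) := by
      rw [ech_neg p hp, ech_eq_exp, ← Complex.exp_neg]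
    rw [hneg, ← ech_add p hp]
    congr 1
    rw [neg_add_eq_sub, ← Finset.sum_sub_distrib]
    exact Finset.sum_congr rfl fun i _ => by simp [sub_mul]
  set N := (E.filter (fun y => ∀ ζ ∈ P₀, ∑ i, (x₀ - y) i * ζ i = 0)).card with hN
  have hSB : ∑ ξ : P₀, ftE p E ξ * ech p (∑ i, x₀ i * (ξ : Fin 3 → ZMod p) i)
      = ((p : ℂ) ^ 3)⁻¹ * ((N : ℂ) * (p : ℂ) ^ 2) := by
    rw [Fintype.sum_congr _ _ hexp, ← Finset.mul_sum]
    congr 1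
    rw [Finset.sum_comm]
    have : ∀ y ∈ E, ∑ ξ : P₀, ech p (∑ i, (x₀ - y) i * (ξ : Fin 3 → ZMod p) i)
        = if (∀ ζ ∈ P₀, ∑ i, (x₀ - y) i * ζ i = 0) then (p : ℂ) ^ 2 else 0 := by
      intro y _
      by_cases h : ∀ ζ ∈ P₀, ∑ i, (x₀ - y) i * ζ i = 0
      · rw [if_pos h]
        have : ∀ ξ : P₀, ech p (∑ i, (x₀ - y) i * (ξ : Fin 3 → ZMod p) i) = 1 := by
          intro ξ
          rw [h ξ.1 ξ.2, ech_zero p hp]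
        rw [Fintype.sum_congr _ _ this]
        simp [hcardP.symm]
      · rw [if_neg h, sum_ech_zero p hp P₀ _ h]
    rw [Finset.sum_congr rfl this, ← Finset.sum_filter, Finset.sum_const, nsmul_eq_mul]
  have hkey : (E.card : ℂ) = (N : ℂ) * (p : ℂ) ^ 2 :=
    mul_left_cancel₀ hp3 (hS0.symm.trans hSB)
  have hkeyN : E.card = N * p ^ 2 := by exact_mod_cast hkey
  have hN1 : 1 ≤ N := by
    have hx : x₀ ∈ E.filter (fun y => ∀ ζ ∈ P₀, ∑ i, (x₀ - y) i * ζ i = 0) := by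
      simp [Finset.mem_filter, hx₀]
    rw [hN]
    exact Finset.card_pos.mpr ⟨x₀, hx⟩
  have h2 : p ^ 2 ≤ E.card := by
    calc p ^ 2 = 1 * p ^ 2 := (one_mul _).symm
    _ ≤ N * p ^ 2 := Nat.mul_le_mul_right _ hN1
    _ = E.card := hkeyN.symm
  exact le_antisymm hcard h2
end

section
/- Let p be an odd prime and suppose E, A ⊆ 𝔽_p^3 form a spectral pair with |E| = |A| = mp, where 2 ≤ m ≤ p − 1. Then for every two-dimensional subspace P of 𝔽_p^3, the number of one-dimensional subspaces contained in P that are determined by E is at most p, and likewise for A (a plane contains p + 1 one-dimensional subspaces, so at least one direction of each plane is not determined). -/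
open Finset

open Polynomial

noncomputable def zeta (p : ℕ) : ℂ := Complex.exp (2 * (Real.pi : ℂ) * Complex.I / p)

noncomputable def ee (p : ℕ) (z : ZMod p) : ℂ := zeta p ^ z.val

noncomputable def dotp {p d : ℕ} (x y : Fin d → ZMod p) : ZMod p := ∑ i, x i * y i

variable {p : ℕ}

theorem zeta_prim (hp : 1 < p) : IsPrimitiveRoot (zeta p) p :=
  Complex.isPrimitiveRoot_exp p (by omega)

theorem zeta_pow_p (hp : 1 < p) : zeta p ^ p = 1 := (zeta_prim hp).pow_eq_one

theorem zeta_pow_mod (hp : 1 < p) (a : ℕ) : zeta p ^ (a % p) = zeta p ^ a := by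
  conv_rhs => rw [← Nat.div_add_mod a p]
  rw [pow_add, pow_mul, zeta_pow_p hp, one_pow, one_mul]

theorem ee_add (hp : 1 < p) (z w : ZMod p) : ee p (z + w) = ee p z * ee p w := by
  haveI : NeZero p := ⟨by omega⟩
  rw [ee, ee, ee, ZMod.val_add, zeta_pow_mod hp, pow_add]

theorem ee_zero : ee p (0 : ZMod p) = 1 := by
  rcases Nat.eq_zero_or_pos p with h | h
  · subst h; simp [ee]
  · haveI : NeZero p := ⟨by omega⟩
    rw [ee, ZMod.val_zero, pow_zero]

theorem ee_ne_zero (z : ZMod p) : ee p z ≠ 0 := by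
  rw [ee]
  exact pow_ne_zero _ (Complex.exp_ne_zero _)

theorem ee_sub (hp : 1 < p) (z w : ZMod p) : ee p (z - w) = ee p z * (ee p w)⁻¹ := by
  have h := ee_add hp (z - w) w
  rw [sub_add_cancel] at h
  field_simp [ee_ne_zero]
  rw [← h]

theorem ee_one_ne_one (hp : 1 < p) : ee p (1 : ZMod p) ≠ 1 := by
  haveI : NeZero p := ⟨by omega⟩
  rw [ee, ZMod.val_one'' (by omega), pow_one]
  exact (zeta_prim hp).ne_one hp

theorem conj_zeta : (starRingEnd ℂ) (zeta p) = (zeta p)⁻¹ := by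
  rw [zeta, ← Complex.exp_conj, ← Complex.exp_neg]
  congr 1
  simp only [map_div₀, map_mul, Complex.conj_I, Complex.conj_natCast, map_ofNat,
    Complex.conj_ofReal]
  ring

theorem conj_ee (z : ZMod p) : (starRingEnd ℂ) (ee p z) = (ee p z)⁻¹ := by
  rw [ee, map_pow, conj_zeta, inv_pow]

theorem chr_eq (a x : Fin 3 → ZMod p) : chr p a x = ee p (dotp x a) := by
  rw [chr, ee, dotp, zeta, ← Complex.exp_nat_mul]
  congr 1
  ring
theorem dotp_sub (x a b : Fin 3 → ZMod p) : dotp x (a - b) = dotp x a - dotp x b := by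
  simp [dotp, mul_sub, Finset.sum_sub_distrib]

theorem dotp_add (x a b : Fin 3 → ZMod p) : dotp x (a + b) = dotp x a + dotp x b := by
  simp [dotp, mul_add, Finset.sum_add_distrib]

theorem dotp_smul (x : Fin 3 → ZMod p) (t : ZMod p) (ξ : Fin 3 → ZMod p) :
    dotp x (t • ξ) = t * dotp x ξ := by
  simp [dotp, Finset.mul_sum]
  exact Finset.sum_congr rfl fun i _ => by ring

theorem dotp_comm (x y : Fin 3 → ZMod p) : dotp x y = dotp y x := by
  simp [dotp, mul_comm]

theorem dotp_zero (x : Fin 3 → ZMod p) : dotp x (0 : Fin 3 → ZMod p) = 0 := by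
  simp [dotp]

theorem chr_mul_conj (hp : 1 < p) (a b x : Fin 3 → ZMod p) :
    chr p a x * (starRingEnd ℂ) (chr p b x) = ee p (dotp x (a - b)) := by
  rw [chr_eq, chr_eq, conj_ee, dotp_sub, ee_sub hp]

/-- sum of `ee` over all of `ZMod p` vanishes. -/
theorem sum_ee [NeZero p] (hp : 1 < p) : ∑ j : ZMod p, ee p j = 0 := by
  have h : ∑ j : ZMod p, ee p j = ∑ j : ZMod p, ee p (j + 1) :=
    (Fintype.sum_equiv (Equiv.addRight (1 : ZMod p)) _ _ (fun j => rfl)).symm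
  have h2 : ∑ j : ZMod p, ee p (j + 1) = (∑ j : ZMod p, ee p j) * ee p 1 := by
    rw [Finset.sum_mul]
    exact Finset.sum_congr rfl fun j _ => ee_add hp j 1
  have h3 : (∑ j : ZMod p, ee p j) * (ee p 1 - 1) = 0 := by
    rw [mul_sub, mul_one, ← h2, ← h]
    ring
  rcases mul_eq_zero.1 h3 with h4 | h4
  · exact h4
  · exact absurd (by linear_combination h4) (ee_one_ne_one hp)

theorem sum_ee_mul [NeZero p] (hp : 1 < p) {t : ZMod p} (hpp : p.Prime) (ht : t ≠ 0) :
    ∑ j : ZMod p, ee p (t * j) = 0 := by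
  haveI : Fact p.Prime := ⟨hpp⟩
  rw [← sum_ee hp]
  exact Fintype.sum_equiv (Equiv.mulLeft₀ t ht) _ _ (fun j => by simp)
/-- If a ℕ-linear combination of the `p`-th roots of unity vanishes (`p` prime),
the coefficients are constant. -/
theorem const_of_sum_eq_zero [NeZero p] (hpp : p.Prime) (c : ZMod p → ℕ)
    (h : ∑ j : ZMod p, (c j : ℂ) * ee p j = 0) : ∀ j, c j = c 0 := by
  haveI : Fact p.Prime := ⟨hpp⟩
  have hp : 1 < p := hpp.one_lt
  set ζ := zeta p with hζ
  have prim : IsPrimitiveRoot ζ p := zeta_prim hp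
  -- the polynomial with the counts as coefficients
  set q : Polynomial ℚ := ∑ i ∈ Finset.range p, Polynomial.C ((c i : ℚ)) * Polynomial.X ^ i
    with hq
  have hcoeff : ∀ k < p, q.coeff k = (c k : ℚ) := by
    intro k hk
    rw [hq, Polynomial.finset_sum_coeff]
    rw [Finset.sum_eq_single k]
    · simp
    · intro b hb hbk
      simp [Polynomial.coeff_C_mul, Polynomial.coeff_X_pow, hbk, Ne.symm hbk]
    · intro hk'; exact absurd (Finset.mem_range.2 hk) hk'
  have haev : (Polynomial.aeval ζ) q = 0 := by
    rw [hq]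
    rw [map_sum]
    have : ∀ i ∈ Finset.range p, (Polynomial.aeval ζ) (Polynomial.C ((c i : ℚ)) *
        Polynomial.X ^ i) = ((c ((i : ZMod p)) : ℂ)) * ee p ((i : ZMod p)) := by
      intro i hi
      rw [map_mul, map_pow, Polynomial.aeval_C, Polynomial.aeval_X, map_natCast, ee,
        ZMod.val_natCast_of_lt (Finset.mem_range.1 hi)]
    rw [Finset.sum_congr rfl this, ← h]
    refine Finset.sum_nbij' (fun i => ((i : ZMod p))) (fun j => j.val) ?_ ?_ ?_ ?_ ?_
    · intro a ha; exact Finset.mem_univ _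
    · intro j _; exact Finset.mem_range.2 (ZMod.val_lt j)
    · intro i hi; exact ZMod.val_natCast_of_lt (Finset.mem_range.1 hi)
    · intro j _; exact ZMod.natCast_rightInverse j
    · intro i hi; rfl
  have hdvd : Polynomial.cyclotomic p ℚ ∣ q := by
    rw [Polynomial.cyclotomic_eq_minpoly_rat prim hpp.pos]
    exact minpoly.dvd ℚ ζ haev
  obtain ⟨r, hr⟩ := hdvd
  have hΦcoeff : ∀ k < p, (Polynomial.cyclotomic p ℚ).coeff k = 1 := by
    intro k hk
    rw [Polynomial.cyclotomic_prime, Polynomial.finset_sum_coeff]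
    rw [Finset.sum_eq_single k]
    · simp
    · intro b hb hbk; simp [Polynomial.coeff_X_pow, Ne.symm hbk]
    · intro hk'; exact absurd (Finset.mem_range.2 hk) hk'
  have hconst : ∀ k < p, q.coeff k = q.coeff 0 := by
    rcases eq_or_ne q 0 with h0 | h0
    · intro k hk; rw [h0]; simp
    · have hr0 : r ≠ 0 := by rintro rfl; rw [mul_zero] at hr; exact h0 hr
      have hdq : q.natDegree ≤ p - 1 := by
        apply Polynomial.natDegree_sum_le_of_forall_le
        intro i hi
        refine le_trans (Polynomial.natDegree_C_mul_X_pow_le _ _) ?_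
        have := Finset.mem_range.1 hi
        omega
      have hdΦ : (Polynomial.cyclotomic p ℚ).natDegree = p - 1 := by
        rw [Polynomial.natDegree_cyclotomic, Nat.totient_prime hpp]
      have hdr : r.natDegree = 0 := by
        have := Polynomial.natDegree_mul (Polynomial.cyclotomic_ne_zero p ℚ) hr0
        rw [← hr, hdΦ] at this
        omega
      obtain ⟨a, ha⟩ := Polynomial.natDegree_eq_zero.1 hdr
      intro k hk
      rw [hr, ← ha, Polynomial.coeff_mul_C, Polynomial.coeff_mul_C,
        hΦcoeff k hk, hΦcoeff 0 hpp.pos]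
  intro j
  have hv := hconst j.val (ZMod.val_lt j)
  rw [hcoeff _ (ZMod.val_lt j), hcoeff 0 hpp.pos] at hv
  rw [ZMod.natCast_rightInverse j] at hv
  exact_mod_cast hv
noncomputable def SB (p : ℕ) (B : Finset (Fin 3 → ZMod p)) (ξ : Fin 3 → ZMod p) : ℂ :=
  ∑ x ∈ B, ee p (dotp x ξ)

theorem fiber_decomp [NeZero p] (B : Finset (Fin 3 → ZMod p)) (ξ : Fin 3 → ZMod p)
    (g : ZMod p → ℂ) :
    ∑ x ∈ B, g (dotp x ξ) =
      ∑ j : ZMod p, ((B.filter (fun x => dotp x ξ = j)).card : ℂ) * g j := by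
  rw [← Finset.sum_fiberwise' B (fun x => dotp x ξ) g]
  exact Finset.sum_congr rfl fun j _ => by
    rw [Finset.sum_const, nsmul_eq_mul]

theorem line_vanish (hpp : p.Prime) {B : Finset (Fin 3 → ZMod p)} {ξ : Fin 3 → ZMod p}
    (h : SB p B ξ = 0) {t : ZMod p} (ht : t ≠ 0) : SB p B (t • ξ) = 0 := by
  haveI : NeZero p := ⟨hpp.ne_zero⟩
  have hconst := const_of_sum_eq_zero hpp
    (fun j => (B.filter (fun x => dotp x ξ = j)).card)
    (by rw [← fiber_decomp]; exact h)
  have h2 : SB p B (t • ξ) = ∑ j : ZMod p,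
      ((B.filter (fun x => dotp x ξ = j)).card : ℂ) * ee p (t * j) := by
    rw [SB]
    have : ∀ x ∈ B, ee p (dotp x (t • ξ)) = ee p (t * dotp x ξ) := fun x _ => by
      rw [dotp_smul]
    rw [Finset.sum_congr rfl this, fiber_decomp B ξ (fun j => ee p (t * j))]
  rw [h2]
  have h3 : ∀ j : ZMod p, ((B.filter (fun x => dotp x ξ = j)).card : ℂ) =
      ((B.filter (fun x => dotp x ξ = 0)).card : ℂ) := fun j => by
    exact_mod_cast congrArg Nat.cast (hconst j)
  calc ∑ j : ZMod p, ((B.filter (fun x => dotp x ξ = j)).card : ℂ) * ee p (t * j)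
      = ((B.filter (fun x => dotp x ξ = 0)).card : ℂ) * ∑ j : ZMod p, ee p (t * j) := by
        rw [Finset.mul_sum]; exact Finset.sum_congr rfl fun j _ => by rw [h3 j]
    _ = 0 := by rw [sum_ee_mul hpp.one_lt hpp ht, mul_zero]
theorem main_contra (hpp : p.Prime) {m : ℕ} (hm : 2 ≤ m) (hm' : m ≤ p - 1)
    (B : Finset (Fin 3 → ZMod p)) (hB : B.card = m * p)
    (P : Submodule (ZMod p) (Fin 3 → ZMod p))
    (hP : Module.finrank (ZMod p) P = 2)
    (hvan : ∀ ξ ∈ P, ξ ≠ (0 : Fin 3 → ZMod p) → SB p B ξ = 0) : False := by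
  classical
  haveI : NeZero p := ⟨hpp.ne_zero⟩
  haveI : Fact p.Prime := ⟨hpp⟩
  haveI : Fintype P := Fintype.ofFinite P
  have hp1 : 1 < p := hpp.one_lt
  have hcardP : Fintype.card P = p ^ 2 := by
    rw [Module.card_eq_pow_finrank (K := ZMod p) (V := P), ZMod.card, hP]
  -- the total sum equals |B|
  have key : ∑ ξ : P, SB p B ξ.1 = (B.card : ℂ) := by
    rw [Finset.sum_eq_single_of_mem (⟨0, P.zero_mem⟩ : P) (Finset.mem_univ _)]
    · simp [SB, dotp_zero, ee_zero]
    · intro ξ _ hne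
      exact hvan ξ.1 ξ.2 (fun h0 => hne (Subtype.ext h0))
  -- swap the order of summation
  have swap : ∑ ξ : P, SB p B ξ.1 = ∑ x ∈ B, ∑ ξ : P, ee p (dotp x ξ.1) := by
    simp only [SB]
    exact Finset.sum_comm
  -- inner sums
  have hT1 : ∀ x : Fin 3 → ZMod p, (∀ ξ : P, dotp x ξ.1 = 0) →
      ∑ ξ : P, ee p (dotp x ξ.1) = ((p : ℂ)) ^ 2 := by
    intro x hx
    have : ∀ ξ : P, ee p (dotp x ξ.1) = 1 := fun ξ => by rw [hx ξ, ee_zero]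
    rw [Finset.sum_congr rfl (fun ξ _ => this ξ), Finset.sum_const, nsmul_eq_mul,
      Finset.card_univ, hcardP, mul_one]
    push_cast
    ring
  have hT0 : ∀ x : Fin 3 → ZMod p, (¬ ∀ ξ : P, dotp x ξ.1 = 0) →
      ∑ ξ : P, ee p (dotp x ξ.1) = 0 := by
    intro x hx
    push_neg at hx
    obtain ⟨ξ₁, hξ₁⟩ := hx
    set d : ZMod p := dotp x ξ₁.1 with hd
    set ξ₀ : P := d⁻¹ • ξ₁ with hξ₀
    have hdot0 : dotp x ξ₀.1 = 1 := by
      rw [hξ₀, Submodule.coe_smul, dotp_smul, ← hd, inv_mul_cancel₀ hξ₁]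
    have htrans : ∑ ξ : P, ee p (dotp x ξ.1) = ∑ ξ : P, ee p (dotp x (ξ + ξ₀).1) :=
      (Fintype.sum_equiv (Equiv.addRight ξ₀) _ _ (fun ξ => rfl)).symm
    have hmul : ∑ ξ : P, ee p (dotp x (ξ + ξ₀).1) =
        (∑ ξ : P, ee p (dotp x ξ.1)) * ee p 1 := by
      rw [Finset.sum_mul]
      refine Finset.sum_congr rfl fun ξ _ => ?_
      rw [Submodule.coe_add, dotp_add, ee_add hp1, hdot0]
    have hfin : (∑ ξ : P, ee p (dotp x ξ.1)) * (ee p 1 - 1) = 0 := by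
      rw [mul_sub, mul_one, ← hmul, ← htrans]
      ring
    rcases mul_eq_zero.1 hfin with h4 | h4
    · exact h4
    · exact absurd (by linear_combination h4) (ee_one_ne_one hp1)
  -- split B according to the condition
  set cond : (Fin 3 → ZMod p) → Prop := fun x => ∀ ξ : P, dotp x ξ.1 = 0 with hcond
  have hsplit : ∑ x ∈ B, ∑ ξ : P, ee p (dotp x ξ.1) =
      ((B.filter cond).card : ℂ) * (p : ℂ) ^ 2 := by
    rw [← Finset.sum_filter_add_sum_filter_not B cond]
    have e1 : ∑ x ∈ B.filter cond, ∑ ξ : P, ee p (dotp x ξ.1) =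
        ((B.filter cond).card : ℂ) * (p : ℂ) ^ 2 := by
      rw [Finset.sum_congr rfl (fun x hx => hT1 x ((Finset.mem_filter.1 hx).2)),
        Finset.sum_const, nsmul_eq_mul]
    have e2 : ∑ x ∈ B.filter (fun x => ¬ cond x), ∑ ξ : P, ee p (dotp x ξ.1) = 0 := by
      rw [Finset.sum_congr rfl (fun x hx => hT0 x ((Finset.mem_filter.1 hx).2))]
      simp
    rw [e1, e2, add_zero]
  -- conclude
  have hnat : (m * p : ℕ) = (B.filter cond).card * p ^ 2 := by
    have hc : ((B.card : ℕ) : ℂ) = (((B.filter cond).card * p ^ 2 : ℕ) : ℂ) := by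
      rw [← key, swap, hsplit]
      push_cast
      ring
    rw [← hB]
    exact_mod_cast hc
  set N := (B.filter cond).card
  have hppos : 0 < p := hpp.pos
  have hmN : m = N * p := by
    have : m * p = (N * p) * p := by rw [hnat]; ring
    exact Nat.eq_of_mul_eq_mul_right hppos this
  rcases Nat.eq_zero_or_pos N with h | h
  · rw [h, zero_mul] at hmN; omega
  · have : p ≤ m := by calc p = 1 * p := (one_mul p).symm
                         _ ≤ N * p := Nat.mul_le_mul_right p h
                         _ = m := hmN.symm
    omega
theorem nondeg (hpp : p.Prime) {m : ℕ} (hm : 2 ≤ m) (hm' : m ≤ p - 1)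
    (B F : Finset (Fin 3 → ZMod p)) (hB : B.card = m * p)
    (hvan : ∀ f₁ ∈ F, ∀ f₂ ∈ F, f₁ ≠ f₂ → SB p B (f₁ - f₂) = 0)
    (P : Submodule (ZMod p) (Fin 3 → ZMod p))
    (hP : Module.finrank (ZMod p) P = 2) :
    {D : Submodule (ZMod p) (Fin 3 → ZMod p) |
        Module.finrank (ZMod p) D = 1 ∧ D ≤ P ∧ Determines p F D}.ncard ≤ p := by
  classical
  haveI : Fact p.Prime := ⟨hpp⟩
  haveI : NeZero p := ⟨hpp.ne_zero⟩
  set S := {D : Submodule (ZMod p) (Fin 3 → ZMod p) |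
      Module.finrank (ZMod p) D = 1 ∧ D ≤ P ∧ Determines p F D} with hS
  -- there is an undetermined direction in `P`
  have hex : ∃ w : Fin 3 → ZMod p, w ∈ P ∧ w ≠ 0 ∧
      ¬ Determines p F (Submodule.span (ZMod p) {w}) := by
    by_contra hcon
    push_neg at hcon
    refine main_contra hpp hm hm' B hB P hP ?_
    intro ξ hξ hξ0
    obtain ⟨f₁, hf₁, f₂, hf₂, hne, hmem⟩ := hcon ξ hξ hξ0
    rw [Submodule.mem_span_singleton] at hmem
    obtain ⟨t, ht⟩ := hmem
    have ht0 : t ≠ 0 := by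
      rintro rfl
      rw [zero_smul] at ht
      exact hne (sub_eq_zero.1 ht.symm)
    have h1 : SB p B (t • ξ) = 0 := by rw [ht]; exact hvan f₁ hf₁ f₂ hf₂ hne
    have h2 := line_vanish hpp h1 (inv_ne_zero ht0)
    rwa [smul_smul, inv_mul_cancel₀ ht0, one_smul] at h2
  obtain ⟨w, hwP, hw0, hwnd⟩ := hex
  set D₀ := Submodule.span (ZMod p) {w} with hD₀
  have hD₀P : D₀ ≤ P := (Submodule.span_singleton_le_iff_mem w P).2 hwP
  have hD₀rank : Module.finrank (ZMod p) D₀ = 1 := finrank_span_singleton hw0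
  have hD₀ne : D₀ ≠ P := fun h => by rw [h, hP] at hD₀rank; omega
  obtain ⟨u, huP, huD₀⟩ := SetLike.exists_of_lt (lt_of_le_of_ne hD₀P hD₀ne)
  -- `u, w` span `P`
  have hli : LinearIndependent (ZMod p) ![u, w] := by
    rw [linearIndependent_fin2]
    refine ⟨by simpa using hw0, fun a ha => ?_⟩
    simp only [Matrix.cons_val_one, Matrix.head_cons, Matrix.cons_val_zero] at ha
    exact huD₀ (ha ▸ Submodule.smul_mem _ a (Submodule.mem_span_singleton_self w))
  have hspan : Submodule.span (ZMod p) {u, w} = P := by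
    have hrange : Set.range ![u, w] = {u, w} := by
      simp [Matrix.range_cons, Matrix.range_empty, Set.insert_comm]
      exact Set.pair_comm w u
    have hle : Submodule.span (ZMod p) {u, w} ≤ P := by
      rw [Submodule.span_le]
      rintro x (rfl | rfl)
      · exact huP
      · exact hwP
    refine Submodule.eq_of_le_of_finrank_le hle ?_
    rw [hP, ← hrange, finrank_span_eq_card hli]
    simp
  -- every determined direction in the set contains `u + t • w` for some `t`
  have hkey : ∀ D ∈ S, ∃ t : ZMod p, u + t • w ∈ D := by
    intro D hD
    obtain ⟨hD1, hDP, hDdet⟩ := hD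
    haveI : Module.Finite (ZMod p) D := Module.Finite.of_finite
    obtain ⟨v, hv0, hvgen⟩ := finrank_eq_one_iff'.1 hD1
    have hvP : (v : Fin 3 → ZMod p) ∈ P := hDP v.2
    rw [← hspan] at hvP
    obtain ⟨a, b, hab⟩ := Submodule.mem_span_pair.1 hvP
    have hvne : (v : Fin 3 → ZMod p) ≠ 0 := fun h => hv0 (Subtype.ext h)
    have ha : a ≠ 0 := by
      rintro rfl
      rw [zero_smul, zero_add] at hab
      -- then D = D₀, contradiction with hwnd
      have hvD₀ : (v : Fin 3 → ZMod p) ∈ D₀ :=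
        hab ▸ Submodule.smul_mem _ b (Submodule.mem_span_singleton_self w)
      have hDle : D ≤ D₀ := by
        intro x hx
        obtain ⟨c, hc⟩ := hvgen ⟨x, hx⟩
        have : c • (v : Fin 3 → ZMod p) = x := congrArg Subtype.val hc
        exact this ▸ Submodule.smul_mem _ c hvD₀
      have : D = D₀ := Submodule.eq_of_le_of_finrank_le hDle (by rw [hD₀rank, hD1])
      exact hwnd (this ▸ hDdet)
    refine ⟨a⁻¹ * b, ?_⟩
    have : u + (a⁻¹ * b) • w = a⁻¹ • (v : Fin 3 → ZMod p) := by
      rw [← hab, smul_add, smul_smul, smul_smul, inv_mul_cancel₀ ha, one_smul]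
    rw [this]
    exact Submodule.smul_mem _ _ v.2
  -- the chosen `t` gives an injection into `ZMod p`
  set f : Submodule (ZMod p) (Fin 3 → ZMod p) → ZMod p := fun D =>
    if h : ∃ t : ZMod p, u + t • w ∈ D then h.choose else 0 with hf
  have hmem : ∀ D ∈ S, u + f D • w ∈ D := by
    intro D hD
    have h := hkey D hD
    rw [hf]
    simp only [dif_pos h]
    exact h.choose_spec
  have hinj : Set.InjOn f S := by
    intro D hD D' hD' hEq
    have h1 := hmem D hD
    have h2 := hmem D' hD'
    rw [hEq] at h1
    set x := u + f D' • w with hx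
    have hx0 : x ≠ 0 := by
      intro h0
      apply huD₀
      have : u = -(f D' • w) := by rw [eq_neg_iff_add_eq_zero]; exact h0
      rw [this]
      exact Submodule.neg_mem _ (Submodule.smul_mem _ _ (Submodule.mem_span_singleton_self w))
    have e1 : Submodule.span (ZMod p) {x} = D := by
      haveI : Module.Finite (ZMod p) D := Module.Finite.of_finite
      refine Submodule.eq_of_le_of_finrank_le
        ((Submodule.span_singleton_le_iff_mem x D).2 h1) ?_
      rw [finrank_span_singleton hx0, hD.1]
    have e2 : Submodule.span (ZMod p) {x} = D' := by
      haveI : Module.Finite (ZMod p) D' := Module.Finite.of_finite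
      refine Submodule.eq_of_le_of_finrank_le
        ((Submodule.span_singleton_le_iff_mem x D').2 h2) ?_
      rw [finrank_span_singleton hx0, hD'.1]
    rw [← e1, e2]
  have := Set.ncard_le_ncard_of_injOn f (fun D _ => Set.mem_univ (f D)) hinj Set.finite_univ
  rwa [Set.ncard_univ, Nat.card_eq_fintype_card, ZMod.card] at this
theorem chr_mul_conj' (hp1 : 1 < p) (a x y : Fin 3 → ZMod p) :
    chr p a x * (starRingEnd ℂ) (chr p a y) = ee p (dotp a (x - y)) := by
  rw [chr_eq, chr_eq, conj_ee, ← ee_sub hp1, dotp_comm x a, dotp_comm y a, ← dotp_sub]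

theorem V1 (hpp : p.Prime) {E A : Finset (Fin 3 → ZMod p)}
    (horth : ∀ a ∈ A, ∀ b ∈ A, a ≠ b →
      ∑ x ∈ E, chr p a x * (starRingEnd ℂ) (chr p b x) = 0) :
    ∀ a ∈ A, ∀ b ∈ A, a ≠ b → SB p E (a - b) = 0 := by
  intro a ha b hb hab
  rw [SB, ← horth a ha b hb hab]
  exact Finset.sum_congr rfl fun x _ => (chr_mul_conj hpp.one_lt a b x).symm

theorem V2 (hpp : p.Prime) {E A : Finset (Fin 3 → ZMod p)} (hEA : E.card = A.card)
    (hE0 : E.card ≠ 0)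
    (horth : ∀ a ∈ A, ∀ b ∈ A, a ≠ b →
      ∑ x ∈ E, chr p a x * (starRingEnd ℂ) (chr p b x) = 0) :
    ∀ x ∈ E, ∀ y ∈ E, x ≠ y → SB p A (x - y) = 0 := by
  classical
  have hp1 := hpp.one_lt
  have hcE : ((E.card : ℂ)) ≠ 0 := Nat.cast_ne_zero.2 hE0
  set M : Matrix {a // a ∈ A} {x // x ∈ E} ℂ := fun a x => chr p a.1 x.1 with hM
  set N : Matrix {x // x ∈ E} {a // a ∈ A} ℂ :=
    fun x a => ((E.card : ℂ))⁻¹ * (starRingEnd ℂ) (chr p a.1 x.1) with hN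
  have hMN : M * N = 1 := by
    ext a b
    rw [Matrix.mul_apply, Matrix.one_apply]
    have hsum : ∑ x : {x // x ∈ E}, M a x * N x b =
        (E.card : ℂ)⁻¹ * ∑ x ∈ E, chr p a.1 x * (starRingEnd ℂ) (chr p b.1 x) := by
      rw [Finset.mul_sum, ← Finset.sum_coe_sort E
        (fun x => (E.card : ℂ)⁻¹ * (chr p a.1 x * (starRingEnd ℂ) (chr p b.1 x)))]
      exact Finset.sum_congr rfl fun x _ => by rw [hM, hN]; ring
    rw [hsum]
    by_cases hab : a = b
    · subst hab
      simp only [if_pos rfl]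
      have : ∀ x ∈ E, chr p a.1 x * (starRingEnd ℂ) (chr p a.1 x) = 1 := by
        intro x _
        rw [chr_mul_conj hp1, sub_self, dotp_zero, ee_zero]
      rw [Finset.sum_congr rfl this, Finset.sum_const, nsmul_eq_mul, mul_one]
      exact inv_mul_cancel₀ hcE
    · have hab' : a.1 ≠ b.1 := fun h => hab (Subtype.ext h)
      rw [horth a.1 a.2 b.1 b.2 hab', mul_zero, if_neg hab]
  have e : {a // a ∈ A} ≃ {x // x ∈ E} :=
    Fintype.equivOfCardEq (by rw [Fintype.card_coe, Fintype.card_coe, hEA])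
  have hNM : N * M = 1 := (Matrix.mul_eq_one_comm_of_equiv e).1 hMN
  intro x hx y hy hxy
  have hentry : (N * M) ⟨y, hy⟩ ⟨x, hx⟩ = 0 := by
    rw [hNM, Matrix.one_apply, if_neg]
    exact fun h => hxy (congrArg Subtype.val h).symm
  rw [Matrix.mul_apply] at hentry
  have hsum2 : ∑ a : {a // a ∈ A}, N ⟨y, hy⟩ a * M a ⟨x, hx⟩ =
      (E.card : ℂ)⁻¹ * SB p A (x - y) := by
    rw [SB, Finset.mul_sum, ← Finset.sum_coe_sort A
      (fun a => (E.card : ℂ)⁻¹ * ee p (dotp a (x - y)))]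
    refine Finset.sum_congr rfl fun a _ => ?_
    rw [hM, hN, ← chr_mul_conj' hp1 a.1 x y]
    ring
  rw [hsum2] at hentry
  rcases mul_eq_zero.1 hentry with h | h
  · exact absurd h (inv_ne_zero hcE)
  · exact h

/-- If `(E, A)` is a spectral pair in `𝔽_p^3` (`p` an odd prime) with
`|E| = |A| = mp`, `2 ≤ m ≤ p - 1`, then `E` and `A` each determine at most `p`
of the `p + 1` one-dimensional subspaces contained in any two-dimensional
subspace `P`. -/
theorem determines_at_most_p_directions_of_plane (p m : ℕ) (hp : p.Prime)
    (hodd : Odd p) (E A : Finset (Fin 3 → ZMod p))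
    (hpair : IsSpectralPair p E A)
    (hE : E.card = m * p) (hA : A.card = m * p)
    (hm : 2 ≤ m) (hm' : m ≤ p - 1)
    (P : Submodule (ZMod p) (Fin 3 → ZMod p))
    (hP : Module.finrank (ZMod p) P = 2) :
    {D : Submodule (ZMod p) (Fin 3 → ZMod p) |
        Module.finrank (ZMod p) D = 1 ∧ D ≤ P ∧ Determines p E D}.ncard ≤ p ∧
    {D : Submodule (ZMod p) (Fin 3 → ZMod p) |
        Module.finrank (ZMod p) D = 1 ∧ D ≤ P ∧ Determines p A D}.ncard ≤ p := by
  obtain ⟨horth, -, -⟩ := hpair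
  have hE0 : E.card ≠ 0 := by
    rw [hE]
    exact Nat.mul_ne_zero (by omega) hp.ne_zero
  constructor
  · exact nondeg hp hm hm' A E hA
      (fun x hx y hy hxy => V2 hp (hE.trans hA.symm) hE0 horth x hx y hy hxy) P hP
  · exact nondeg hp hm hm' E A hE (V1 hp horth) P hP
end

section
/- Let p be an odd prime and suppose E, A ⊆ 𝔽_p^3 form a spectral pair with |E| = |A| = mp, where 2 ≤ m ≤ p − 1. Then |E ∩ ℓ| ≤ min{m, p − m} and |A ∩ ℓ| ≤ min{m, p − m} for every line ℓ of 𝔽_p^3 (every coset of every one-dimensional subspace). -/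
open Finset

open Finset Polynomial
open scoped Matrix

set_option linter.unusedSectionVars false
set_option maxHeartbeats 1000000

namespace LineConc

variable {p : ℕ}

noncomputable def zeta (p : ℕ) : ℂ := Complex.exp (2 * (Real.pi : ℂ) * Complex.I / p)

lemma hprim (hp : p ≠ 0) : IsPrimitiveRoot (zeta p) p := Complex.isPrimitiveRoot_exp p hp

noncomputable def psi (p : ℕ) (s : ZMod p) : ℂ := zeta p ^ s.val

lemma zeta_pow_p (hp : p ≠ 0) : zeta p ^ p = 1 := (hprim hp).pow_eq_one

lemma zeta_pow_mod (hp : p ≠ 0) (n : ℕ) : zeta p ^ n = zeta p ^ (n % p) := by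
  conv_lhs => rw [← Nat.div_add_mod n p]
  rw [pow_add, pow_mul, zeta_pow_p hp, one_pow, one_mul]

variable [NeZero p]

lemma psi_add (s t : ZMod p) : psi p (s + t) = psi p s * psi p t := by
  have hp : p ≠ 0 := NeZero.ne p
  rw [psi, psi, psi, ZMod.val_add, ← zeta_pow_mod hp, pow_add]

lemma psi_zero : psi p 0 = 1 := by
  simp [psi]

lemma abs_psi (s : ZMod p) : ‖psi p s‖ = 1 := by
  have : zeta p = Complex.exp (((2 * Real.pi / p : ℝ) : ℂ) * Complex.I) := by
    rw [zeta]; norm_num; ring_nf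
  rw [psi, norm_pow, this, Complex.norm_exp_ofReal_mul_I, one_pow]

lemma conj_psi (s : ZMod p) : (starRingEnd ℂ) (psi p s) = psi p (-s) := by
  have h1 : psi p s * psi p (-s) = 1 := by rw [← psi_add]; simp [psi_zero]
  have h2 : (psi p s)⁻¹ = (starRingEnd ℂ) (psi p s) :=
    Complex.inv_eq_conj (by exact abs_psi s)
  rw [← h2, eq_comm]
  exact eq_inv_of_mul_eq_one_left (by rw [mul_comm]; exact h1)

lemma psi_eq_one_iff (s : ZMod p) : psi p s = 1 ↔ s = 0 := by
  constructor
  · intro h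
    have hp : p ≠ 0 := NeZero.ne p
    have := ((hprim hp).pow_eq_one_iff_dvd s.val).mp h
    have hlt := ZMod.val_lt s
    have hv : s.val = 0 := Nat.eq_zero_of_dvd_of_lt this hlt
    exact (ZMod.val_eq_zero s).mp hv
  · intro h; rw [h]; exact psi_zero

lemma psi_ne_one {s : ZMod p} (hs : s ≠ 0) : psi p s ≠ 1 :=
  fun h => hs ((psi_eq_one_iff s).mp h)

lemma sum_psi (hp : 1 < p) : ∑ c : ZMod p, psi p c = 0 := by
  haveI : Fact (1 < p) := ⟨hp⟩
  have h1 : ∑ c : ZMod p, psi p (c + 1) = ∑ c : ZMod p, psi p c :=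
    Equiv.sum_comp (Equiv.addRight (1 : ZMod p)) (psi p)
  have h2 : ∑ c : ZMod p, psi p (c + 1) = (∑ c : ZMod p, psi p c) * psi p 1 := by
    rw [Finset.sum_mul]
    exact Finset.sum_congr rfl fun c _ => psi_add c 1
  have h3 : (∑ c : ZMod p, psi p c) * (psi p 1 - 1) = 0 := by
    rw [mul_sub, mul_one, ← h2, h1, sub_self]
  rcases mul_eq_zero.mp h3 with h | h
  · exact h
  · exact absurd (by linear_combination h) (psi_ne_one (one_ne_zero : (1 : ZMod p) ≠ 0))

/-- The dot product on `𝔽_p³`. -/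
def dot (x y : Fin 3 → ZMod p) : ZMod p := ∑ i, x i * y i

lemma dot_comm (x y : Fin 3 → ZMod p) : dot x y = dot y x :=
  Finset.sum_congr rfl fun i _ => mul_comm _ _

lemma dot_sub_left (x y w : Fin 3 → ZMod p) : dot (x - y) w = dot x w - dot y w := by
  simp [dot, sub_mul, Finset.sum_sub_distrib]

lemma dot_add_left (x y w : Fin 3 → ZMod p) : dot (x + y) w = dot x w + dot y w := by
  simp [dot, add_mul, Finset.sum_add_distrib]

lemma dot_smul_left (t : ZMod p) (x w : Fin 3 → ZMod p) : dot (t • x) w = t * dot x w := by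
  simp [dot, Finset.mul_sum, mul_assoc]

lemma dot_smul_right (t : ZMod p) (x w : Fin 3 → ZMod p) : dot x (t • w) = t * dot x w := by
  rw [dot_comm, dot_smul_left, dot_comm]

lemma dot_zero_left (w : Fin 3 → ZMod p) : dot 0 w = 0 := by simp [dot]

lemma dot_zero_right (w : Fin 3 → ZMod p) : dot w 0 = 0 := by simp [dot]

lemma chr_eq_psi (a x : Fin 3 → ZMod p) : chr p a x = psi p (dot x a) := by
  rw [chr, psi, dot]
  have : 2 * (Real.pi : ℂ) * Complex.I * ((ZMod.val (∑ i, x i * a i) : ℕ) : ℂ) / (p : ℂ)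
      = ((ZMod.val (∑ i, x i * a i) : ℕ) : ℂ) * (2 * (Real.pi : ℂ) * Complex.I / p) := by
    ring
  rw [this, Complex.exp_nat_mul, zeta]

/-- If a ℕ-combination of the `p`-th roots of unity vanishes, all coefficients agree. -/
lemma const_of_sum_zero (hp : p.Prime) (n : ZMod p → ℕ)
    (h : ∑ c : ZMod p, (n c : ℂ) * psi p c = 0) : ∀ c c', n c = n c' := by
  haveI : Fact p.Prime := ⟨hp⟩
  have hp0 : p ≠ 0 := hp.pos.ne'
  -- reindex over range p
  have h' : ∑ i ∈ Finset.range p, ((n ((i : ℕ) : ZMod p)) : ℂ) * zeta p ^ i = 0 := by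
    refine Eq.trans ?_ h
    refine Finset.sum_nbij' (fun i => ((i : ℕ) : ZMod p)) (fun c => c.val) ?_ ?_ ?_ ?_ ?_
    · intro i _; exact Finset.mem_univ _
    · intro c _; exact Finset.mem_range.mpr (ZMod.val_lt c)
    · intro i hi; exact ZMod.val_cast_of_lt (Finset.mem_range.mp hi)
    · intro c _; exact ZMod.natCast_rightInverse c
    · intro i hi
      rw [psi, ZMod.val_cast_of_lt (Finset.mem_range.mp hi)]
  -- the polynomial
  set Q : Polynomial ℚ := ∑ i ∈ Finset.range p, Polynomial.C ((n ((i : ℕ) : ZMod p) : ℚ)) * Polynomial.X ^ i with hQ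
  have hQeval : Polynomial.aeval (zeta p) Q = 0 := by
    rw [hQ, map_sum]
    rw [← h']
    refine Finset.sum_congr rfl fun i _ => ?_
    rw [map_mul, map_pow, Polynomial.aeval_C, Polynomial.aeval_X]
    push_cast
    ring
  have hdvd : Polynomial.cyclotomic p ℚ ∣ Q := by
    rw [Polynomial.cyclotomic_eq_minpoly_rat (hprim hp0) hp.pos]
    exact minpoly.dvd ℚ _ hQeval
  obtain ⟨R, hR⟩ := hdvd
  have hdegQ : Q.natDegree ≤ p - 1 := by
    refine Polynomial.natDegree_sum_le_of_forall_le _ _ fun i hi => ?_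
    refine le_trans (Polynomial.natDegree_C_mul_le _ _) ?_
    rw [Polynomial.natDegree_X_pow]
    have := Finset.mem_range.mp hi
    omega
  have hcycdeg : (Polynomial.cyclotomic p ℚ).natDegree = p - 1 := by
    rw [Polynomial.natDegree_cyclotomic, Nat.totient_prime hp]
  have hRdeg : R.natDegree = 0 := by
    by_contra h0
    have hRne : R ≠ 0 := fun hcon => h0 (by rw [hcon]; simp)
    have hQne : Q ≠ 0 := by
      rw [hR]
      exact mul_ne_zero (Polynomial.cyclotomic_ne_zero p ℚ) hRne
    have : Q.natDegree = (Polynomial.cyclotomic p ℚ).natDegree + R.natDegree := by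
      rw [hR, Polynomial.natDegree_mul (Polynomial.cyclotomic_ne_zero p ℚ) hRne]
    have hp1 := hp.two_le
    omega
  obtain ⟨r₀, hr₀⟩ := Polynomial.natDegree_eq_zero.mp hRdeg
  have hkey : ∀ i < p, (n ((i : ℕ) : ZMod p) : ℚ) = r₀ := by
    intro i hi
    have hc1 : Q.coeff i = (n ((i : ℕ) : ZMod p) : ℚ) := by
      rw [hQ, Polynomial.finset_sum_coeff]
      rw [Finset.sum_eq_single i]
      · rw [Polynomial.coeff_C_mul, Polynomial.coeff_X_pow, if_pos rfl, mul_one]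
      · intro j _ hji
        rw [Polynomial.coeff_C_mul, Polynomial.coeff_X_pow, if_neg (fun hcon => hji hcon.symm), mul_zero]
      · intro hcon; exact absurd (Finset.mem_range.mpr hi) hcon
    have hc2 : Q.coeff i = r₀ := by
      rw [hR, ← hr₀, Polynomial.coeff_mul_C, Polynomial.cyclotomic_prime ℚ p,
        Polynomial.finset_sum_coeff]
      rw [Finset.sum_eq_single i]
      · rw [Polynomial.coeff_X_pow, if_pos rfl, one_mul]
      · intro j _ hji
        rw [Polynomial.coeff_X_pow, if_neg (fun hcon => hji hcon.symm)]
      · intro hcon; exact absurd (Finset.mem_range.mpr hi) hcon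
    rw [← hc1, hc2]
  intro c c'
  have e1 := hkey c.val (ZMod.val_lt c)
  have e2 := hkey c'.val (ZMod.val_lt c')
  rw [ZMod.natCast_rightInverse c] at e1
  rw [ZMod.natCast_rightInverse c'] at e2
  exact_mod_cast e1.trans e2.symm

/-- If all fibers of `f` on `S` have the same size, the character sum vanishes. -/
lemma sum_psi_fiber (hp : p.Prime) (S : Finset (Fin 3 → ZMod p)) (f : (Fin 3 → ZMod p) → ZMod p)
    (n : ℕ) (h : ∀ c, (S.filter fun x => f x = c).card = n) :
    ∑ x ∈ S, psi p (f x) = 0 := by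
  haveI : Fact p.Prime := ⟨hp⟩
  rw [← Finset.sum_fiberwise S f (fun x => psi p (f x))]
  have hfib : ∀ c : ZMod p, ∑ x ∈ S.filter (fun x => f x = c), psi p (f x) = (n : ℂ) * psi p c := by
    intro c
    have hc : ∀ x ∈ S.filter (fun x => f x = c), psi p (f x) = psi p c := fun x hx => by
      rw [(Finset.mem_filter.mp hx).2]
    rw [Finset.sum_congr rfl hc, Finset.sum_const, h c, nsmul_eq_mul]
  rw [Finset.sum_congr rfl (fun c _ => hfib c), ← Finset.mul_sum, sum_psi hp.one_lt, mul_zero]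

/-- Equidistribution: if the character sum along `w` vanishes, all plane counts equal `m`. -/
lemma equidist {m : ℕ} (hp : p.Prime) (S : Finset (Fin 3 → ZMod p)) (hS : S.card = m * p)
    (w : Fin 3 → ZMod p) (hsum : ∑ x ∈ S, psi p (dot x w) = 0) (c : ZMod p) :
    (S.filter fun x => dot x w = c).card = m := by
  haveI : Fact p.Prime := ⟨hp⟩
  set n : ZMod p → ℕ := fun c => (S.filter fun x => dot x w = c).card with hn
  have h2 : ∑ c : ZMod p, (n c : ℂ) * psi p c = 0 := by
    rw [← hsum, ← Finset.sum_fiberwise S (fun x => dot x w) (fun x => psi p (dot x w))]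
    refine Finset.sum_congr rfl fun c _ => ?_
    have hc : ∀ x ∈ S.filter (fun x => dot x w = c), psi p (dot x w) = psi p c := fun x hx => by
      rw [(Finset.mem_filter.mp hx).2]
    rw [Finset.sum_congr rfl hc, Finset.sum_const, nsmul_eq_mul]
  have hconst := const_of_sum_zero hp n h2
  have htot : ∑ c : ZMod p, n c = m * p := by
    rw [← hS]
    exact (Finset.card_eq_sum_card_fiberwise (fun x _ => Finset.mem_univ (dot x w))).symm
  have hsame : ∑ c' : ZMod p, n c' = p * n c := by
    rw [Finset.sum_congr rfl (fun c' _ => hconst c' c), Finset.sum_const, Finset.card_univ,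
      ZMod.card, smul_eq_mul]
  have : p * n c = m * p := by rw [← hsame, htot]
  have := this.trans (mul_comm m p)
  exact Nat.eq_of_mul_eq_mul_left hp.pos this

lemma card_univ_V (hp : p.Prime) : Fintype.card (Fin 3 → ZMod p) = p ^ 3 := by
  rw [Fintype.card_fun, ZMod.card, Fintype.card_fin]

/-- Each affine plane `{w : w·y = c}` (for `y ≠ 0`) has exactly `p²` points. -/
lemma fiber_card (hp : p.Prime) (y : Fin 3 → ZMod p) (hy : y ≠ 0) (c : ZMod p) :
    ((Finset.univ : Finset (Fin 3 → ZMod p)).filter fun w => dot w y = c).card = p ^ 2 := by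
  haveI : Fact p.Prime := ⟨hp⟩
  obtain ⟨i₀, hi₀⟩ : ∃ i, y i ≠ 0 := by
    by_contra hcon; push_neg at hcon
    exact hy (funext hcon)
  have hcc : ∀ c : ZMod p,
      ((Finset.univ : Finset (Fin 3 → ZMod p)).filter fun w => dot w y = c).card
      = ((Finset.univ : Finset (Fin 3 → ZMod p)).filter fun w => dot w y = 0).card := by
    intro c
    set wc : Fin 3 → ZMod p := (c * (y i₀)⁻¹) • (Pi.single i₀ (1 : ZMod p) : Fin 3 → ZMod p) with hwc
    have hdotwc : dot wc y = c := by
      rw [hwc, dot_smul_left]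
      have : dot (Pi.single i₀ (1 : ZMod p)) y = y i₀ := by
        rw [dot, Finset.sum_eq_single i₀]
        · simp
        · intro j _ hj; simp [Pi.single_eq_of_ne hj]
        · intro hcon; exact absurd (Finset.mem_univ i₀) hcon
      rw [this, mul_assoc, inv_mul_cancel₀ hi₀, mul_one]
    refine Finset.card_nbij' (fun w => w - wc) (fun w => w + wc) ?_ ?_ ?_ ?_
    · intro w hw
      rw [Finset.mem_coe, Finset.mem_filter] at hw ⊢
      exact ⟨Finset.mem_univ _, by rw [dot_sub_left, hw.2, hdotwc, sub_self]⟩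
    · intro w hw
      rw [Finset.mem_coe, Finset.mem_filter] at hw ⊢
      exact ⟨Finset.mem_univ _, by rw [dot_add_left, hw.2, hdotwc, zero_add]⟩
    · intro w _; simp
    · intro w _; simp
  have htot : ∑ c : ZMod p,
      ((Finset.univ : Finset (Fin 3 → ZMod p)).filter fun w => dot w y = c).card = p ^ 3 := by
    rw [← card_univ_V hp, ← Finset.card_univ]
    exact (Finset.card_eq_sum_card_fiberwise (fun x _ => Finset.mem_univ (dot x y))).symm
  rw [Finset.sum_congr rfl (fun c _ => hcc c), Finset.sum_const, Finset.card_univ, ZMod.card,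
    smul_eq_mul] at htot
  have hp3 : p * p ^ 2 = p ^ 3 := by ring
  have := htot.trans hp3.symm
  rw [hcc c]
  exact Nat.eq_of_mul_eq_mul_left hp.pos this

/-- Pigeonhole: the common kernel of two functionals has at least `p` elements. -/
lemma pigeon (hp : p.Prime) (d z : Fin 3 → ZMod p) :
    p ≤ ((Finset.univ : Finset (Fin 3 → ZMod p)).filter
      fun w => dot w d = 0 ∧ dot w z = 0).card := by
  haveI : Fact p.Prime := ⟨hp⟩
  classical
  set φ : (Fin 3 → ZMod p) → ZMod p × ZMod p := fun w => (dot w d, dot w z) with hφ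
  set G := (Finset.univ : Finset (Fin 3 → ZMod p)).filter fun w => dot w d = 0 ∧ dot w z = 0 with hG
  set I := (Finset.univ : Finset (Fin 3 → ZMod p)).image φ with hI
  have htot : (Finset.univ : Finset (Fin 3 → ZMod p)).card
      = ∑ y ∈ I, ((Finset.univ : Finset (Fin 3 → ZMod p)).filter fun w => φ w = y).card :=
    Finset.card_eq_sum_card_fiberwise (fun w _ => Finset.mem_image_of_mem φ (Finset.mem_univ w))
  have hfib : ∀ y ∈ I, ((Finset.univ : Finset (Fin 3 → ZMod p)).filter fun w => φ w = y).card
      = G.card := by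
    intro y hy
    obtain ⟨w', _, hw'⟩ := Finset.mem_image.mp hy
    refine Finset.card_nbij' (fun w => w - w') (fun w => w + w') ?_ ?_ ?_ ?_
    · intro w hw
      rw [Finset.mem_coe, Finset.mem_filter] at hw
      have h1 : dot w d = dot w' d := congrArg Prod.fst (hw.2.trans hw'.symm)
      have h2 : dot w z = dot w' z := congrArg Prod.snd (hw.2.trans hw'.symm)
      rw [hG, Finset.mem_coe, Finset.mem_filter]
      exact ⟨Finset.mem_univ _, by rw [dot_sub_left, h1, sub_self], by rw [dot_sub_left, h2, sub_self]⟩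
    · intro w hw
      rw [hG, Finset.mem_coe, Finset.mem_filter] at hw
      rw [Finset.mem_coe, Finset.mem_filter]
      refine ⟨Finset.mem_univ _, ?_⟩
      rw [hφ, ← hw']
      have e1 : dot (w + w') d = dot w' d := by rw [dot_add_left, hw.2.1, zero_add]
      have e2 : dot (w + w') z = dot w' z := by rw [dot_add_left, hw.2.2, zero_add]
      rw [Prod.mk.injEq]
      exact ⟨e1, e2⟩
    · intro w _; simp
    · intro w _; simp
  rw [Finset.sum_congr rfl hfib, Finset.sum_const, smul_eq_mul] at htot
  have hIcard : I.card ≤ p ^ 2 := by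
    calc I.card ≤ Fintype.card (ZMod p × ZMod p) := Finset.card_le_univ I
    _ = p ^ 2 := by rw [Fintype.card_prod, ZMod.card]; ring
  have hV : (Finset.univ : Finset (Fin 3 → ZMod p)).card = p ^ 3 := by
    rw [Finset.card_univ]; exact card_univ_V hp
  have hple : p ^ 2 * p ≤ p ^ 2 * G.card := by
    calc p ^ 2 * p = p ^ 3 := by ring
    _ = I.card * G.card := by rw [← hV, htot]
    _ ≤ p ^ 2 * G.card := Nat.mul_le_mul_right _ hIcard
  exact Nat.le_of_mul_le_mul_left hple (pow_pos hp.pos 2)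

/-- In every plane through the origin there is a direction `u` along which the
`A`-character sum does not vanish. -/
lemma exists_bad {m : ℕ} (hp : p.Prime) (hm : 2 ≤ m) (hm' : m ≤ p - 1)
    (A : Finset (Fin 3 → ZMod p)) (hA : A.card = m * p) (w : Fin 3 → ZMod p) (hw : w ≠ 0) :
    ∃ u, u ≠ 0 ∧ dot u w = 0 ∧ ∑ a ∈ A, psi p (dot a u) ≠ 0 := by
  haveI : Fact p.Prime := ⟨hp⟩
  classical
  by_contra hcon
  push_neg at hcon
  set K := (Finset.univ : Finset (Fin 3 → ZMod p)).filter fun u => dot u w = 0 with hK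
  have hK0 : (0 : Fin 3 → ZMod p) ∈ K := by
    rw [hK, Finset.mem_filter]; exact ⟨Finset.mem_univ _, dot_zero_left w⟩
  have hT1 : ∑ u ∈ K, ∑ a ∈ A, psi p (dot a u) = ((m * p : ℕ) : ℂ) := by
    rw [Finset.sum_eq_single_of_mem 0 hK0]
    · have : ∀ a ∈ A, psi p (dot a 0) = 1 := fun a _ => by rw [dot_zero_right, psi_zero]
      rw [Finset.sum_congr rfl this, Finset.sum_const, hA, nsmul_eq_mul, mul_one]
    · intro u hu hu0
      refine hcon u hu0 ?_
      exact (Finset.mem_filter.mp hu).2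
  have hga : ∀ a ∈ A, (∃ u₀ ∈ K, dot a u₀ ≠ 0) → ∑ u ∈ K, psi p (dot a u) = 0 := by
    intro a _ ⟨u₀, hu₀K, hu₀⟩
    have hshift : ∑ u ∈ K, psi p (dot a (u + u₀)) = ∑ u ∈ K, psi p (dot a u) := by
      refine Finset.sum_nbij' (fun u => u + u₀) (fun u => u - u₀) ?_ ?_ ?_ ?_ ?_
      · intro u hu
        rw [Finset.mem_filter] at hu ⊢
        exact ⟨Finset.mem_univ _, by
          rw [dot_add_left, hu.2, (Finset.mem_filter.mp hu₀K).2, add_zero]⟩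
      · intro u hu
        rw [Finset.mem_filter] at hu ⊢
        exact ⟨Finset.mem_univ _, by
          rw [dot_sub_left, hu.2, (Finset.mem_filter.mp hu₀K).2, sub_zero]⟩
      · intro u _; simp
      · intro u _; simp
      · intro u _; rfl
    have hexp : ∑ u ∈ K, psi p (dot a (u + u₀))
        = psi p (dot a u₀) * ∑ u ∈ K, psi p (dot a u) := by
      rw [Finset.mul_sum]
      refine Finset.sum_congr rfl fun u _ => ?_
      rw [dot_comm a (u + u₀), dot_add_left, dot_comm u a, dot_comm u₀ a, psi_add, mul_comm]
    have hzero : (psi p (dot a u₀) - 1) * ∑ u ∈ K, psi p (dot a u) = 0 := by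
      rw [sub_mul, one_mul, ← hexp, hshift, sub_self]
    rcases mul_eq_zero.mp hzero with h | h
    · exact absurd (by linear_combination h) (psi_ne_one hu₀)
    · exact h
  have hgb : ∀ a ∈ A, (∀ u ∈ K, dot a u = 0) → ∑ u ∈ K, psi p (dot a u) = ((p ^ 2 : ℕ) : ℂ) := by
    intro a _ hall
    have : ∀ u ∈ K, psi p (dot a u) = 1 := fun u hu => by rw [hall u hu, psi_zero]
    rw [Finset.sum_congr rfl this, Finset.sum_const, nsmul_eq_mul, mul_one]
    congr 1
    rw [hK]
    exact fiber_card hp w hw 0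
  set N := (A.filter fun a => ∀ u ∈ K, dot a u = 0).card with hN
  have hT2 : ∑ u ∈ K, ∑ a ∈ A, psi p (dot a u) = ((N * p ^ 2 : ℕ) : ℂ) := by
    rw [Finset.sum_comm]
    have : ∀ a ∈ A, ∑ u ∈ K, psi p (dot a u)
        = if (∀ u ∈ K, dot a u = 0) then ((p ^ 2 : ℕ) : ℂ) else 0 := by
      intro a ha
      by_cases hcase : ∀ u ∈ K, dot a u = 0
      · rw [if_pos hcase]; exact hgb a ha hcase
      · rw [if_neg hcase]
        push_neg at hcase
        obtain ⟨u₀, hu₀K, hu₀⟩ := hcase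
        exact hga a ha ⟨u₀, hu₀K, hu₀⟩
    rw [Finset.sum_congr rfl this, Finset.sum_ite, Finset.sum_const_zero, add_zero,
      Finset.sum_const, hN, nsmul_eq_mul]
    push_cast
    ring
  have hNat : m * p = N * p ^ 2 := by
    have := hT1.symm.trans hT2
    exact_mod_cast this
  have hple := hp.two_le
  rcases Nat.eq_zero_or_pos N with h0 | h1
  · rw [h0, zero_mul] at hNat
    have := Nat.mul_eq_zero.mp hNat
    omega
  · have : m = N * p := by
      have h2 : m * p = (N * p) * p := by rw [hNat]; ring
      exact Nat.eq_of_mul_eq_mul_right hp.pos h2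
    have : p ≤ m := by
      rw [this]
      calc p = 1 * p := (one_mul p).symm
      _ ≤ N * p := Nat.mul_le_mul_right p h1
    omega

/-- If the `A`-character sum along `u` does not vanish, no two points of `E` differ
by a multiple of `u`. -/
lemma inj_along {m : ℕ} (hp : p.Prime) (E A : Finset (Fin 3 → ZMod p)) (hA : A.card = m * p)
    (orth1 : ∀ x ∈ E, ∀ y ∈ E, x ≠ y → ∑ a ∈ A, psi p (dot a (x - y)) = 0)
    (u : Fin 3 → ZMod p) (hchar : ∑ a ∈ A, psi p (dot a u) ≠ 0) :
    ∀ x ∈ E, ∀ y ∈ E, (∃ t : ZMod p, x - y = t • u) → x = y := by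
  haveI : Fact p.Prime := ⟨hp⟩
  intro x hx y hy ht
  obtain ⟨t, ht⟩ := ht
  by_contra hxy
  have ht0 : t ≠ 0 := by
    intro h0
    rw [h0, zero_smul] at ht
    exact hxy (sub_eq_zero.mp ht)
  have h1 : ∑ a ∈ A, psi p (dot a (t • u)) = 0 := by
    rw [← ht]; exact orth1 x hx y hy hxy
  have h1' : ∑ a ∈ A, psi p (dot a (t • u)) = ∑ a ∈ A, psi p (dot a (t • u)) := rfl
  -- convert to the `dot x w` orientation used by `equidist`
  have h2 : ∑ a ∈ A, psi p (dot a (t • u)) = 0 := h1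
  have heq := fun c => equidist (m := m) hp A hA (t • u)
    (by
      have : ∀ a ∈ A, psi p (dot a (t • u)) = psi p (dot a (t • u)) := fun _ _ => rfl
      exact h2) c
  apply hchar
  refine sum_psi_fiber hp A (fun a => dot a u) m ?_
  intro c
  rw [← heq (t * c)]
  congr 1
  refine Finset.filter_congr fun a _ => ?_
  rw [dot_smul_right]
  constructor
  · intro h
    have h' : dot a u = c := h
    rw [h']
  · intro h
    exact mul_left_cancel₀ ht0 h

lemma third_index : ∀ i j : Fin 3, i ≠ j →
    ∃ l, l ≠ i ∧ l ≠ j ∧ ∀ t : Fin 3, t = i ∨ t = j ∨ t = l := by decide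

lemma dot_expand {i j l : Fin 3} (hij : i ≠ j) (hli : l ≠ i) (hlj : l ≠ j)
    (hcover : ∀ t : Fin 3, t = i ∨ t = j ∨ t = l) (x y : Fin 3 → ZMod p) :
    dot x y = x i * y i + x j * y j + x l * y l := by
  have huniv : (Finset.univ : Finset (Fin 3)) = {i, j, l} := by
    ext t
    simp only [Finset.mem_univ, true_iff, Finset.mem_insert, Finset.mem_singleton]
    exact hcover t
  rw [dot, huniv]
  rw [Finset.sum_insert (by simp [hij, hli.symm]), Finset.sum_insert (by simp [hlj.symm]),
    Finset.sum_singleton, add_assoc]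

/-- A plane `{x : x·w = c}` containing a direction `u` along which `S` is injective
contains at most `p` points of `S`. -/
lemma plane_le (hp : p.Prime) (S : Finset (Fin 3 → ZMod p)) (w : Fin 3 → ZMod p) (hw : w ≠ 0)
    (u : Fin 3 → ZMod p) (hu : u ≠ 0) (huw : dot u w = 0)
    (hinj : ∀ x ∈ S, ∀ y ∈ S, (∃ t : ZMod p, x - y = t • u) → x = y) (c : ZMod p) :
    (S.filter fun x => dot x w = c).card ≤ p := by
  haveI : Fact p.Prime := ⟨hp⟩
  obtain ⟨i, hui⟩ : ∃ i, u i ≠ 0 := by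
    by_contra hcon; push_neg at hcon
    exact hu (funext hcon)
  obtain ⟨j, hij, hwj⟩ : ∃ j, j ≠ i ∧ w j ≠ 0 := by
    by_contra hcon; push_neg at hcon
    -- then dot u w = u i * w i and w i = 0 would force w = 0
    have hwi : w i = 0 := by
      have hdot : dot u w = u i * w i := by
        rw [dot, Finset.sum_eq_single i]
        · intro b _ hb; rw [hcon b hb, mul_zero]
        · intro hmem; exact absurd (Finset.mem_univ i) hmem
      rw [huw] at hdot
      rcases mul_eq_zero.mp hdot.symm with h | h
      · exact absurd h hui
      · exact h
    refine hw (funext fun t => ?_)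
    by_cases hti : t = i
    · rw [hti]; exact hwi
    · exact hcon t hti
  obtain ⟨l, hlj, hli, hcover⟩ := third_index j i hij
  have hij0 : i ≠ j := fun h => hij h.symm
  have hcover' : ∀ t : Fin 3, t = i ∨ t = j ∨ t = l := by
    intro t; rcases hcover t with h | h | h
    · exact Or.inr (Or.inl h)
    · exact Or.inl h
    · exact Or.inr (Or.inr h)
  set g : (Fin 3 → ZMod p) → ZMod p := fun x => x l - x i * (u i)⁻¹ * u l with hg
  have hinjg : Set.InjOn g ↑(S.filter fun x => dot x w = c) := by
    intro x hx x' hx' hgx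
    simp only [Finset.coe_filter, Set.mem_setOf_eq] at hx hx'
    refine hinj x hx.1 x' hx'.1 ⟨(x i - x' i) * (u i)⁻¹, ?_⟩
    have hdot0 : dot (x - x') w = 0 := by rw [dot_sub_left, hx.2, hx'.2, sub_self]
    set t : ZMod p := (x i - x' i) * (u i)⁻¹ with htdef
    have ei : (x - x') i = t * u i := by
      rw [htdef, Pi.sub_apply, mul_assoc, inv_mul_cancel₀ hui, mul_one]
    have el : (x - x') l = t * u l := by
      have hgx' : x l - x i * (u i)⁻¹ * u l = x' l - x' i * (u i)⁻¹ * u l := hgx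
      rw [Pi.sub_apply, htdef]
      linear_combination hgx'
    have e1 : (x - x') i * w i + (x - x') j * w j + (x - x') l * w l = 0 := by
      rw [← dot_expand hij0 hli hlj hcover' (x - x') w]; exact hdot0
    have e2 : u i * w i + u j * w j + u l * w l = 0 := by
      rw [← dot_expand hij0 hli hlj hcover' u w]; exact huw
    have ej : (x - x') j = t * u j := by
      have hjj : (x - x') j * w j = (t * u j) * w j := by
        linear_combination e1 - t * e2 - w i * ei - w l * el
      exact mul_right_cancel₀ hwj hjj
    funext r
    rcases hcover' r with h | h | h
    · rw [h, Pi.smul_apply, smul_eq_mul]; exact ei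
    · rw [h, Pi.smul_apply, smul_eq_mul]; exact ej
    · rw [h, Pi.smul_apply, smul_eq_mul]; exact el
  calc (S.filter fun x => dot x w = c).card
      ≤ (Finset.univ : Finset (ZMod p)).card := Finset.card_le_card_of_injOn g
        (fun _ _ => Finset.mem_univ _) hinjg
  _ = p := by rw [Finset.card_univ, ZMod.card]

/-- Duality: orthogonality of the columns of a square character matrix implies
orthogonality of the rows. -/
lemma dual_orth (hp : p.Prime) (E A : Finset (Fin 3 → ZMod p)) (hEA : E.card = A.card)
    (hcard0 : E.card ≠ 0)
    (horth : ∀ a ∈ A, ∀ b ∈ A, a ≠ b →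
      ∑ x ∈ E, chr p a x * (starRingEnd ℂ) (chr p b x) = 0) :
    ∀ x ∈ E, ∀ y ∈ E, x ≠ y →
      ∑ a ∈ A, chr p a x * (starRingEnd ℂ) (chr p a y) = 0 := by
  haveI : Fact p.Prime := ⟨hp⟩
  classical
  have hcards : Fintype.card {a // a ∈ A} = Fintype.card {x // x ∈ E} := by
    rw [Fintype.card_coe, Fintype.card_coe, hEA]
  set e := Fintype.equivOfCardEq hcards with he
  set B : Matrix {a // a ∈ A} {a // a ∈ A} ℂ := fun i j => chr p (j : Fin 3 → ZMod p) ((e i : Fin 3 → ZMod p)) with hB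
  set c : ℂ := (E.card : ℂ) with hc
  have hc0 : c ≠ 0 := by
    rw [hc]
    exact_mod_cast hcard0
  have hprod : ∀ a b : Fin 3 → ZMod p,
      chr p a ≠ 0 → True := fun _ _ _ => trivial
  have hchr_unit : ∀ (a x : Fin 3 → ZMod p),
      (starRingEnd ℂ) (chr p a x) * chr p a x = 1 := by
    intro a x
    rw [chr_eq_psi, conj_psi, ← psi_add, neg_add_cancel, psi_zero]
  have h1 : Bᴴ * B = c • (1 : Matrix {a // a ∈ A} {a // a ∈ A} ℂ) := by
    ext j j'
    rw [Matrix.mul_apply]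
    simp only [Matrix.conjTranspose_apply]
    simp only [hB, Matrix.smul_apply, Matrix.one_apply]
    have hsum : ∑ i : {a // a ∈ A}, star (chr p (j : Fin 3 → ZMod p) (e i : Fin 3 → ZMod p)) *
        chr p (j' : Fin 3 → ZMod p) (e i : Fin 3 → ZMod p)
        = ∑ x : {x // x ∈ E}, star (chr p (j : Fin 3 → ZMod p) (x : Fin 3 → ZMod p)) *
          chr p (j' : Fin 3 → ZMod p) (x : Fin 3 → ZMod p) :=
      Equiv.sum_comp e (fun x => star (chr p (j : Fin 3 → ZMod p) (x : Fin 3 → ZMod p)) *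
        chr p (j' : Fin 3 → ZMod p) (x : Fin 3 → ZMod p))
    rw [hsum, Finset.sum_coe_sort E (fun x => star (chr p (j : Fin 3 → ZMod p) x) *
      chr p (j' : Fin 3 → ZMod p) x)]
    by_cases hjj : j = j'
    · rw [if_pos hjj, smul_eq_mul, mul_one, hjj]
      have : ∀ x ∈ E, star (chr p (j' : Fin 3 → ZMod p) x) * chr p (j' : Fin 3 → ZMod p) x
          = 1 := fun x _ => hchr_unit _ x
      rw [Finset.sum_congr rfl this, Finset.sum_const, nsmul_eq_mul, mul_one, hc]
    · rw [if_neg hjj, smul_eq_mul, mul_zero]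
      have hne : (j : Fin 3 → ZMod p) ≠ (j' : Fin 3 → ZMod p) :=
        fun hcon => hjj (Subtype.ext hcon)
      have := horth (j : Fin 3 → ZMod p) j.2 (j' : Fin 3 → ZMod p) j'.2 hne
      calc ∑ x ∈ E, star (chr p (j : Fin 3 → ZMod p) x) * chr p (j' : Fin 3 → ZMod p) x
          = (starRingEnd ℂ) (∑ x ∈ E, chr p (j : Fin 3 → ZMod p) x *
            (starRingEnd ℂ) (chr p (j' : Fin 3 → ZMod p) x)) := by
            rw [map_sum]
            refine Finset.sum_congr rfl fun x _ => ?_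
            rw [map_mul, Complex.conj_conj]
            rfl
      _ = 0 := by rw [this, map_zero]
  have h2 : B * Bᴴ = c • (1 : Matrix {a // a ∈ A} {a // a ∈ A} ℂ) := by
    have hinv : (c⁻¹ • Bᴴ) * B = 1 := by
      rw [Matrix.smul_mul, h1, smul_smul, inv_mul_cancel₀ hc0, one_smul]
    have hcomm : B * (c⁻¹ • Bᴴ) = 1 := mul_eq_one_comm.mpr hinv
    calc B * Bᴴ = c • (c⁻¹ • (B * Bᴴ)) := by rw [smul_smul, mul_inv_cancel₀ hc0, one_smul]
    _ = c • (B * (c⁻¹ • Bᴴ)) := by rw [Matrix.mul_smul]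
    _ = c • 1 := by rw [hcomm]
  intro x hx y hy hxy
  set ix := e.symm ⟨x, hx⟩ with hix
  set iy := e.symm ⟨y, hy⟩ with hiy
  have hixy : ix ≠ iy := by
    intro hcon
    apply hxy
    have h3 : (⟨x, hx⟩ : {x // x ∈ E}) = ⟨y, hy⟩ := by
      have := congrArg e hcon
      rwa [hix, hiy, Equiv.apply_symm_apply, Equiv.apply_symm_apply] at this
    exact congrArg Subtype.val h3
  have hent : (B * Bᴴ) ix iy = (c • (1 : Matrix {a // a ∈ A} {a // a ∈ A} ℂ)) ix iy := by
    rw [h2]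
  rw [Matrix.mul_apply] at hent
  simp only [Matrix.conjTranspose_apply] at hent
  simp only [hB, Matrix.smul_apply, Matrix.one_apply,
    if_neg hixy, smul_eq_mul, mul_zero] at hent
  rw [hix, hiy, Equiv.apply_symm_apply, Equiv.apply_symm_apply] at hent
  calc ∑ a ∈ A, chr p a x * (starRingEnd ℂ) (chr p a y)
      = ∑ a : {a // a ∈ A}, chr p (a : Fin 3 → ZMod p) x *
        (starRingEnd ℂ) (chr p (a : Fin 3 → ZMod p) y) :=
      (Finset.sum_coe_sort A (fun a => chr p a x * (starRingEnd ℂ) (chr p a y))).symm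
  _ = 0 := by
      rw [← hent]
      refine Finset.sum_congr rfl fun a _ => ?_
      rfl

/-- Main combinatorial bound. -/
lemma main_bound {m : ℕ} (hp : p.Prime) (hp3 : 3 ≤ p)
    (E A : Finset (Fin 3 → ZMod p)) (hE : E.card = m * p) (hA : A.card = m * p)
    (hm : 2 ≤ m) (hm' : m ≤ p - 1)
    (orth1 : ∀ x ∈ E, ∀ y ∈ E, x ≠ y → ∑ a ∈ A, psi p (dot a (x - y)) = 0)
    (orth2 : ∀ a ∈ A, ∀ b ∈ A, a ≠ b → ∑ x ∈ E, psi p (dot x (a - b)) = 0)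
    (d : Fin 3 → ZMod p) (hd : d ≠ 0) (v : Fin 3 → ZMod p) :
    (E.filter fun x => ∃ t : ZMod p, x - v = t • d).card ≤ min m (p - m) := by
  haveI : Fact p.Prime := ⟨hp⟩
  classical
  set L := E.filter fun x => ∃ t : ZMod p, x - v = t • d with hL
  by_cases hk1 : L.card ≤ 1
  · refine le_trans hk1 (le_min ?_ ?_) <;> omega
  push_neg at hk1
  obtain ⟨e₁, he₁, e₂, he₂, he12⟩ := Finset.one_lt_card.mp hk1
  have he₁E : e₁ ∈ E := (Finset.mem_filter.mp he₁).1
  have he₂E : e₂ ∈ E := (Finset.mem_filter.mp he₂).1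
  obtain ⟨t₁, ht₁⟩ := (Finset.mem_filter.mp he₁).2
  obtain ⟨t₂, ht₂⟩ := (Finset.mem_filter.mp he₂).2
  have hτ : e₁ - e₂ = (t₁ - t₂) • d := by
    have h0 : e₁ - e₂ = (e₁ - v) - (e₂ - v) := by abel
    rw [h0, ht₁, ht₂, ← sub_smul]
  have hτ0 : t₁ - t₂ ≠ 0 := by
    intro h0; rw [h0, zero_smul] at hτ; exact he12 (sub_eq_zero.mp hτ)
  have hAsum : ∑ a ∈ A, psi p (dot a ((t₁ - t₂) • d)) = 0 := by
    rw [← hτ]; exact orth1 e₁ he₁E e₂ he₂E he12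
  have hAeq : ∀ c, (A.filter fun a => dot a d = c).card = m := by
    intro c
    have hq := equidist (m := m) hp A hA ((t₁ - t₂) • d) hAsum ((t₁ - t₂) * c)
    rw [← hq]
    congr 1
    refine Finset.filter_congr fun a _ => ?_
    rw [dot_smul_right]
    constructor
    · intro h
      have h' : dot a d = c := h
      rw [h']
    · intro h
      exact mul_left_cancel₀ hτ0 h
  have hA0 : 1 < (A.filter fun a => dot a d = 0).card := by rw [hAeq 0]; omega
  obtain ⟨a₁, ha₁, a₂, ha₂, ha12⟩ := Finset.one_lt_card.mp hA0
  set w₀ := a₁ - a₂ with hw₀def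
  have hw₀ : w₀ ≠ 0 := sub_ne_zero.mpr ha12
  have hw₀d : dot w₀ d = 0 := by
    rw [hw₀def, dot_sub_left, (Finset.mem_filter.mp ha₁).2, (Finset.mem_filter.mp ha₂).2,
      sub_self]
  have hEsum : ∑ x ∈ E, psi p (dot x w₀) = 0 :=
    orth2 a₁ (Finset.mem_filter.mp ha₁).1 a₂ (Finset.mem_filter.mp ha₂).1 ha12
  have hEeq : ∀ c, (E.filter fun x => dot x w₀ = c).card = m := fun c =>
    equidist (m := m) hp E hE w₀ hEsum c
  have hLE : L ⊆ E := Finset.filter_subset _ _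
  -- k ≤ m
  have hkm : L.card ≤ m := by
    rw [← hEeq (dot v w₀)]
    refine Finset.card_le_card ?_
    intro x hx
    rw [hL, Finset.mem_filter] at hx
    obtain ⟨t, ht⟩ := hx.2
    rw [Finset.mem_filter]
    refine ⟨hx.1, ?_⟩
    have h0 : dot (x - v) w₀ = 0 := by
      rw [ht, dot_smul_left, dot_comm d w₀, hw₀d, mul_zero]
    rw [dot_sub_left] at h0
    exact sub_eq_zero.mp h0
  -- the big double count
  set W := (Finset.univ : Finset (Fin 3 → ZMod p)).filter fun w => dot w d = 0 ∧ w ≠ 0 with hW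
  have h0mem : (0 : Fin 3 → ZMod p) ∈ (Finset.univ.filter fun w => dot w d = 0) := by
    rw [Finset.mem_filter]; exact ⟨Finset.mem_univ _, dot_zero_left d⟩
  have hWcard : W.card = p ^ 2 - 1 := by
    have hWer : W = (Finset.univ.filter fun w => dot w d = 0).erase 0 := by
      ext w
      rw [hW, Finset.mem_filter, Finset.mem_erase, Finset.mem_filter]
      constructor
      · rintro ⟨h1, h2, h3⟩; exact ⟨h3, h1, h2⟩
      · rintro ⟨h1, h2, h3⟩; exact ⟨h2, h3, h1⟩
    rw [hWer, Finset.card_erase_of_mem h0mem, fiber_card hp d hd 0]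
  have hswap : ∑ w ∈ W, (E.filter fun x => dot (x - v) w = 0).card
      = ∑ x ∈ E, (W.filter fun w => dot (x - v) w = 0).card := by
    calc ∑ w ∈ W, (E.filter fun x => dot (x - v) w = 0).card
        = ∑ w ∈ W, ∑ x ∈ E, if dot (x - v) w = 0 then 1 else 0 :=
        Finset.sum_congr rfl fun w _ => Finset.card_filter _ _
    _ = ∑ x ∈ E, ∑ w ∈ W, if dot (x - v) w = 0 then 1 else 0 := Finset.sum_comm
    _ = ∑ x ∈ E, (W.filter fun w => dot (x - v) w = 0).card :=
        Finset.sum_congr rfl fun x _ => (Finset.card_filter _ _).symm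
  -- lower bound
  have hlowL : ∀ x ∈ L, (W.filter fun w => dot (x - v) w = 0).card = p ^ 2 - 1 := by
    intro x hx
    obtain ⟨t, ht⟩ := (Finset.mem_filter.mp hx).2
    have : W.filter (fun w => dot (x - v) w = 0) = W := by
      refine Finset.filter_true_of_mem fun w hw => ?_
      rw [ht, dot_smul_left, dot_comm d w, (Finset.mem_filter.mp hw).2.1, mul_zero]
    rw [this, hWcard]
  have hlowR : ∀ x ∈ E, p - 1 ≤ (W.filter fun w => dot (x - v) w = 0).card := by
    intro x _
    have hpig := pigeon hp d (x - v)
    set G := (Finset.univ : Finset (Fin 3 → ZMod p)).filter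
      fun w => dot w d = 0 ∧ dot w (x - v) = 0 with hG
    have h0G : (0 : Fin 3 → ZMod p) ∈ G := by
      rw [hG, Finset.mem_filter]
      exact ⟨Finset.mem_univ _, dot_zero_left d, dot_zero_left (x - v)⟩
    have hsub : G.erase 0 ⊆ W.filter fun w => dot (x - v) w = 0 := by
      intro w hw
      rw [Finset.mem_erase, hG, Finset.mem_filter] at hw
      rw [Finset.mem_filter, hW, Finset.mem_filter]
      exact ⟨⟨Finset.mem_univ _, hw.2.2.1, hw.1⟩, by rw [dot_comm]; exact hw.2.2.2⟩
    calc p - 1 ≤ G.card - 1 := by omega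
    _ = (G.erase 0).card := (Finset.card_erase_of_mem h0G).symm
    _ ≤ _ := Finset.card_le_card hsub
  have hlow : L.card * (p ^ 2 - 1) + (m * p - L.card) * (p - 1)
      ≤ ∑ x ∈ E, (W.filter fun w => dot (x - v) w = 0).card := by
    rw [← Finset.sum_sdiff hLE]
    have hL1 : ∑ x ∈ L, (W.filter fun w => dot (x - v) w = 0).card = L.card * (p ^ 2 - 1) := by
      rw [Finset.sum_congr rfl hlowL, Finset.sum_const, smul_eq_mul]
    have hL2 : (E \ L).card * (p - 1) ≤ ∑ x ∈ E \ L, (W.filter fun w => dot (x - v) w = 0).card := by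
      calc (E \ L).card * (p - 1) = ∑ _x ∈ E \ L, (p - 1) := by rw [Finset.sum_const, smul_eq_mul]
      _ ≤ _ := Finset.sum_le_sum fun x hx => hlowR x (Finset.mem_sdiff.mp hx).1
    have hcardsd : (E \ L).card = m * p - L.card := by
      rw [Finset.card_sdiff_of_subset hLE, hE]
    rw [hL1]
    rw [hcardsd] at hL2
    omega
  -- upper bound
  set W₁ := ((Finset.univ : Finset (ZMod p)).erase 0).image (fun t => t • w₀) with hW₁
  have hW₁sub : W₁ ⊆ W := by
    intro w hw
    obtain ⟨t, ht, htw⟩ := Finset.mem_image.mp hw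
    have ht0 : t ≠ 0 := (Finset.mem_erase.mp ht).1
    rw [hW, Finset.mem_filter]
    refine ⟨Finset.mem_univ _, ?_, ?_⟩
    · rw [← htw, dot_smul_left, hw₀d, mul_zero]
    · rw [← htw]
      intro hcon
      rcases smul_eq_zero.mp hcon with h | h
      · exact ht0 h
      · exact hw₀ h
  have hW₁card : W₁.card = p - 1 := by
    rw [hW₁, Finset.card_image_of_injective _ (smul_left_injective (ZMod p) hw₀),
      Finset.card_erase_of_mem (Finset.mem_univ _), Finset.card_univ, ZMod.card]
  have hterm1 : ∀ w ∈ W₁, (E.filter fun x => dot (x - v) w = 0).card = m := by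
    intro w hw
    obtain ⟨t, ht, htw⟩ := Finset.mem_image.mp hw
    have ht0 : t ≠ 0 := (Finset.mem_erase.mp ht).1
    have hfil : E.filter (fun x => dot (x - v) w = 0) = E.filter (fun x => dot x w₀ = dot v w₀) := by
      refine Finset.filter_congr fun x _ => ?_
      rw [← htw, dot_smul_right, dot_sub_left]
      constructor
      · intro h
        rcases mul_eq_zero.mp h with h' | h'
        · exact absurd h' ht0
        · exact sub_eq_zero.mp h'
      · intro h
        have h' : dot x w₀ - dot v w₀ = 0 := sub_eq_zero.mpr h
        rw [h', mul_zero]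
    rw [hfil, hEeq (dot v w₀)]
  have hterm2 : ∀ w ∈ W, (E.filter fun x => dot (x - v) w = 0).card ≤ p := by
    intro w hw
    rw [hW, Finset.mem_filter] at hw
    obtain ⟨-, hwd, hw0⟩ := hw
    obtain ⟨u, hu0, huw, hchar⟩ := exists_bad (m := m) hp hm hm' A hA w hw0
    have hinj := inj_along (m := m) hp E A hA orth1 u hchar
    have hfil : E.filter (fun x => dot (x - v) w = 0) = E.filter (fun x => dot x w = dot v w) := by
      refine Finset.filter_congr fun x _ => ?_
      rw [dot_sub_left, sub_eq_zero]
    rw [hfil]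
    exact plane_le hp E w hw0 u hu0 huw hinj (dot v w)
  have hup : ∑ w ∈ W, (E.filter fun x => dot (x - v) w = 0).card
      ≤ (p ^ 2 - 1 - (p - 1)) * p + (p - 1) * m := by
    rw [← Finset.sum_sdiff hW₁sub]
    have hu1 : ∑ w ∈ W₁, (E.filter fun x => dot (x - v) w = 0).card = (p - 1) * m := by
      rw [Finset.sum_congr rfl hterm1, Finset.sum_const, smul_eq_mul, hW₁card]
    have hu2 : ∑ w ∈ W \ W₁, (E.filter fun x => dot (x - v) w = 0).card
        ≤ (p ^ 2 - 1 - (p - 1)) * p := by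
      have hcardsd : (W \ W₁).card = p ^ 2 - 1 - (p - 1) := by
        rw [Finset.card_sdiff_of_subset hW₁sub, hWcard, hW₁card]
      calc ∑ w ∈ W \ W₁, (E.filter fun x => dot (x - v) w = 0).card
          ≤ ∑ _w ∈ W \ W₁, p := Finset.sum_le_sum fun w hw =>
            hterm2 w (Finset.mem_sdiff.mp hw).1
      _ = (p ^ 2 - 1 - (p - 1)) * p := by rw [Finset.sum_const, smul_eq_mul, hcardsd]
    omega
  have hfinal : L.card * (p ^ 2 - 1) + (m * p - L.card) * (p - 1)
      ≤ (p ^ 2 - 1 - (p - 1)) * p + (p - 1) * m := le_trans hlow (hswap ▸ hup)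
  -- final arithmetic: k ≤ p - m
  have hkpm : L.card ≤ p - m := by
    set k := L.card with hk
    have hkmle : k ≤ m := hkm
    have hkmp : k ≤ m * p := by
      calc k ≤ m := hkm
      _ ≤ m * p := Nat.le_mul_of_pos_right m hp.pos
    have hpsq : p ≤ p ^ 2 := by
      calc p = p * 1 := (mul_one p).symm
      _ ≤ p * p := Nat.mul_le_mul_left p (by omega)
      _ = p ^ 2 := (sq p).symm
    have hc1 : 1 ≤ p ^ 2 := by omega
    have hc2 : 1 ≤ p := by omega
    have hc3 : p - 1 ≤ p ^ 2 - 1 := by omega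
    have hZ : (k : ℤ) * (p ^ 2 - 1) + ((m : ℤ) * p - k) * (p - 1)
        ≤ ((p : ℤ) ^ 2 - 1 - (p - 1)) * p + ((p : ℤ) - 1) * m := by
      zify [hkmp, hc1, hc2, hc3] at hfinal
      linarith [hfinal]
    have hfact : ((p : ℤ) - 1) * ((k : ℤ) * p + m * p) ≤ ((p : ℤ) - 1) * (m + p ^ 2) := by
      have e1 : ((p : ℤ) - 1) * ((k : ℤ) * p + m * p)
          = (k : ℤ) * (p ^ 2 - 1) + ((m : ℤ) * p - k) * (p - 1) := by ring
      have e2 : ((p : ℤ) - 1) * ((m : ℤ) + p ^ 2)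
          = ((p : ℤ) ^ 2 - 1 - (p - 1)) * p + ((p : ℤ) - 1) * m := by ring
      rw [e1, e2]; exact hZ
    have hppos : (0 : ℤ) < (p : ℤ) - 1 := by
      have h3 : (3 : ℤ) ≤ (p : ℤ) := by exact_mod_cast hp3
      linarith
    have hcore : (k : ℤ) * p + (m : ℤ) * p ≤ (m : ℤ) + (p : ℤ) ^ 2 :=
      le_of_mul_le_mul_left hfact hppos
    by_contra hcon
    push_neg at hcon
    have hmp : m < p := by omega
    have hconZ : (p : ℤ) - (m : ℤ) + 1 ≤ (k : ℤ) := by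
      have hcon' : p - m + 1 ≤ k := by omega
      have := (Nat.cast_le (α := ℤ)).mpr hcon'
      push_cast [Nat.cast_sub (le_of_lt hmp)] at this
      linarith
    have hpZ : (0 : ℤ) ≤ (p : ℤ) := by positivity
    have hmul : ((p : ℤ) - (m : ℤ) + 1) * p ≤ (k : ℤ) * p :=
      mul_le_mul_of_nonneg_right hconZ hpZ
    have hmZ : (m : ℤ) < (p : ℤ) := by exact_mod_cast hmp
    have hexp : ((p : ℤ) - (m : ℤ) + 1) * p = p * p - m * p + p := by ring
    have hsq : (p : ℤ) ^ 2 = p * p := sq (p : ℤ)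
    rw [hexp] at hmul
    rw [hsq] at hcore
    linarith [hcore, hmul, hmZ]
  exact le_min hkm hkpm

lemma dot_sub_right (w x y : Fin 3 → ZMod p) : dot w (x - y) = dot w x - dot w y := by
  rw [dot_comm, dot_sub_left, dot_comm x w, dot_comm y w]

lemma chr_mul_conj (hp : p.Prime) (a b x y : Fin 3 → ZMod p) :
    chr p a x * (starRingEnd ℂ) (chr p b y) = psi p (dot x a - dot y b) := by
  rw [chr_eq_psi, chr_eq_psi, conj_psi, ← psi_add, sub_eq_add_neg]

end LineConc

/-- If `(E, A)` is a spectral pair in `𝔽_p^3` (`p` an odd prime) with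
`|E| = |A| = mp`, `2 ≤ m ≤ p - 1`, then every line (coset of a one-dimensional
subspace) contains at most `min m (p - m)` points of `E`, and likewise for `A`. -/
theorem line_concentration_bound (p m : ℕ) (hp : p.Prime) (hodd : Odd p)
    (E A : Finset (Fin 3 → ZMod p)) (hpair : IsSpectralPair p E A)
    (hE : E.card = m * p) (hA : A.card = m * p)
    (hm : 2 ≤ m) (hm' : m ≤ p - 1)
    (D : Submodule (ZMod p) (Fin 3 → ZMod p))
    (hD : Module.finrank (ZMod p) D = 1) (v : Fin 3 → ZMod p) :
    ((E : Set (Fin 3 → ZMod p)) ∩ {x | x - v ∈ D}).ncard ≤ min m (p - m) ∧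
    ((A : Set (Fin 3 → ZMod p)) ∩ {x | x - v ∈ D}).ncard ≤ min m (p - m) := by
  have hpair1 : ∀ a ∈ A, ∀ b ∈ A, a ≠ b →
      ∑ x ∈ E, chr p a x * (starRingEnd ℂ) (chr p b x) = 0 := hpair.1
  haveI hfact : Fact p.Prime := ⟨hp⟩
  haveI : NeZero p := ⟨hp.pos.ne'⟩
  have hp3 : 3 ≤ p := by
    rcases hodd with ⟨r, hr⟩
    have := hp.two_le
    omega
  classical
  obtain ⟨v₀, hv₀, hv₀span⟩ := finrank_eq_one_iff'.mp hD
  set d : Fin 3 → ZMod p := (v₀ : Fin 3 → ZMod p) with hd_def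
  have hd : d ≠ 0 := by
    intro h
    exact hv₀ (by exact_mod_cast Subtype.ext h)
  have hmem : ∀ x : Fin 3 → ZMod p, x ∈ D ↔ ∃ t : ZMod p, x = t • d := by
    intro x
    constructor
    · intro hx
      obtain ⟨c, hc⟩ := hv₀span ⟨x, hx⟩
      refine ⟨c, ?_⟩
      have := congrArg (Subtype.val : D → (Fin 3 → ZMod p)) hc
      simpa using this.symm
    · rintro ⟨t, ht⟩
      rw [ht]
      exact Submodule.smul_mem D t v₀.2
  have horthAE : ∀ a ∈ A, ∀ b ∈ A, a ≠ b →
      ∑ x ∈ E, LineConc.psi p (LineConc.dot x (a - b)) = 0 := by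
    intro a ha b hb hab
    calc ∑ x ∈ E, LineConc.psi p (LineConc.dot x (a - b))
        = ∑ x ∈ E, chr p a x * (starRingEnd ℂ) (chr p b x) := by
          refine Finset.sum_congr rfl fun x _ => ?_
          rw [LineConc.chr_mul_conj hp, LineConc.dot_sub_right]
    _ = 0 := hpair1 a ha b hb hab
  have hE0 : E.card ≠ 0 := by
    rw [hE]
    have := hp.pos
    positivity
  have hdual := LineConc.dual_orth hp E A (by rw [hE, hA]) hE0 hpair1
  have horthEA : ∀ x ∈ E, ∀ y ∈ E, x ≠ y →
      ∑ a ∈ A, LineConc.psi p (LineConc.dot a (x - y)) = 0 := by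
    intro x hx y hy hxy
    calc ∑ a ∈ A, LineConc.psi p (LineConc.dot a (x - y))
        = ∑ a ∈ A, chr p a x * (starRingEnd ℂ) (chr p a y) := by
          refine Finset.sum_congr rfl fun a _ => ?_
          rw [LineConc.chr_mul_conj hp, LineConc.dot_comm, LineConc.dot_sub_left]
    _ = 0 := hdual x hx y hy hxy
  have hsetE : ((E : Set (Fin 3 → ZMod p)) ∩ {x | x - v ∈ D})
      = ↑(E.filter fun x => ∃ t : ZMod p, x - v = t • d) := by
    ext x
    simp only [Set.mem_inter_iff, Finset.coe_filter, Set.mem_setOf_eq, Finset.mem_coe]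
    rw [hmem (x - v)]
  have hsetA : ((A : Set (Fin 3 → ZMod p)) ∩ {x | x - v ∈ D})
      = ↑(A.filter fun x => ∃ t : ZMod p, x - v = t • d) := by
    ext x
    simp only [Set.mem_inter_iff, Finset.coe_filter, Set.mem_setOf_eq, Finset.mem_coe]
    rw [hmem (x - v)]
  constructor
  · rw [hsetE, Set.ncard_coe_finset]
    exact LineConc.main_bound hp hp3 E A hE hA hm hm' horthEA horthAE d hd v
  · rw [hsetA, Set.ncard_coe_finset]
    exact LineConc.main_bound hp hp3 A E hA hE hm hm' horthAE horthEA d hd v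
end

section
/- There is no spectral set of size 21 in 𝔽_7^3. -/
open Finset
open Polynomial

-- ===== auxiliary machinery =====

instance fact7 : Fact (Nat.Prime 7) := ⟨by norm_num⟩

noncomputable def zeta7 : ℂ := Complex.exp (2 * (Real.pi:ℂ) * Complex.I / 7)

lemma zeta7_prim : IsPrimitiveRoot zeta7 7 := by
  have := Complex.isPrimitiveRoot_exp 7 (by norm_num)
  simpa [zeta7] using this

abbrev Oring : Type := AdjoinRoot (cyclotomic 7 ℤ)
abbrev Fq : Type := AdjoinRoot (cyclotomic 7 (ZMod 3))

noncomputable def phi : Oring →+* ℂ :=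
  AdjoinRoot.lift (Int.castRingHom ℂ) zeta7 (by
    rw [eval₂_eq_eval_map, map_cyclotomic]
    exact zeta7_prim.isRoot_cyclotomic (by norm_num))

lemma phi_root : phi (AdjoinRoot.root (cyclotomic 7 ℤ)) = zeta7 := AdjoinRoot.lift_root _

lemma phi_injective : Function.Injective phi := by
  rw [injective_iff_map_eq_zero]
  intro x hx
  obtain ⟨f, rfl⟩ := AdjoinRoot.mk_surjective x
  rw [AdjoinRoot.mk_eq_zero]
  have hz7 : IsIntegral ℤ zeta7 := zeta7_prim.isIntegral (by norm_num)
  rw [cyclotomic_eq_minpoly zeta7_prim (by norm_num)]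
  apply minpoly.isIntegrallyClosed_dvd hz7
  rw [phi, AdjoinRoot.lift_mk] at hx
  rwa [aeval_def, algebraMap_int_eq]





noncomputable abbrev rr : Oring := AdjoinRoot.root (cyclotomic 7 ℤ)


lemma r7 : rr ^ 7 = 1 := by
  have h : AdjoinRoot.mk (cyclotomic 7 ℤ) (X ^ 7 - 1 : ℤ[X]) = 0 :=
    AdjoinRoot.mk_eq_zero.mpr (cyclotomic.dvd_X_pow_sub_one 7 ℤ)
  rw [map_sub, map_pow, AdjoinRoot.mk_X, map_one, sub_eq_zero] at h
  exact h

lemma key_pow (a b : ℕ) : rr ^ (7 * a + b) = rr ^ b := by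
  rw [pow_add, pow_mul, r7, one_pow, one_mul]

lemma sum_r : 1 + rr + rr^2 + rr^3 + rr^4 + rr^5 + rr^6 = 0 := by
  have h : AdjoinRoot.mk (cyclotomic 7 ℤ) (∑ i ∈ range 7, X ^ i : ℤ[X]) = 0 := by
    rw [← cyclotomic_prime ℤ 7]; exact AdjoinRoot.mk_self
  rw [map_sum] at h
  rw [Finset.sum_range fun i => AdjoinRoot.mk _ (X ^ i), Fin.sum_univ_seven] at h
  simpa [map_pow, AdjoinRoot.mk_X] using h

lemma sig_aux : eval₂ (AdjoinRoot.of (cyclotomic 7 ℤ)) (rr ^ 6) (cyclotomic 7 ℤ) = 0 := by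
  have hc := congrArg (eval₂ (AdjoinRoot.of (cyclotomic 7 ℤ)) (rr ^ 6)) (cyclotomic_prime ℤ 7)
  rw [hc, eval₂_finset_sum]
  rw [Finset.sum_range fun i => eval₂ (AdjoinRoot.of (cyclotomic 7 ℤ)) (rr ^ 6) (X ^ i),
    Fin.sum_univ_seven]
  simp only [eval₂_X_pow, ← pow_mul]
  norm_num [show ((2:Fin 7):ℕ) = 2 from rfl, show ((3:Fin 7):ℕ) = 3 from rfl,
    show ((4:Fin 7):ℕ) = 4 from rfl, show ((5:Fin 7):ℕ) = 5 from rfl,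
    show ((6:Fin 7):ℕ) = 6 from rfl]
  rw [show 12 = 7*1+5 by norm_num, show 18 = 7*2+4 by norm_num,
    show 24 = 7*3+3 by norm_num, show 30 = 7*4+2 by norm_num,
    show 36 = 7*5+1 by norm_num, key_pow, key_pow, key_pow, key_pow, key_pow]
  linear_combination sum_r

noncomputable def sig : Oring →+* Oring :=
  AdjoinRoot.lift (AdjoinRoot.of (cyclotomic 7 ℤ)) (rr ^ 6) sig_aux

lemma sig_root : sig rr = rr ^ 6 := AdjoinRoot.lift_root _

lemma sig_of (a : ℤ) : sig ((AdjoinRoot.of (cyclotomic 7 ℤ)) a) = (AdjoinRoot.of (cyclotomic 7 ℤ)) a :=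
  AdjoinRoot.lift_of _

lemma sig_sig_root : sig (sig rr) = rr := by
  rw [sig_root, map_pow, sig_root, ← pow_mul, show 6*6 = 7*5+1 by norm_num, key_pow, pow_one]

lemma sig_sig (x : Oring) : sig (sig x) = x := by
  obtain ⟨f, rfl⟩ := AdjoinRoot.mk_surjective x
  induction f using Polynomial.induction_on' with
  | add p q hp hq => rw [map_add, map_add, map_add, hp, hq]
  | monomial n a =>
    rw [← C_mul_X_pow_eq_monomial, map_mul, map_pow, AdjoinRoot.mk_C, AdjoinRoot.mk_X,
      map_mul, map_mul, sig_of, sig_of, map_pow, map_pow, sig_sig_root]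


lemma cyclo73_irr : Irreducible (cyclotomic 7 (ZMod 3)) := by
  classical
  set f := cyclotomic 7 (ZMod 3) with hfdef
  have hfm : f.Monic := cyclotomic.monic 7 (ZMod 3)
  have hfd : f.natDegree = 6 := by rw [hfdef, natDegree_cyclotomic]; decide
  have hf0 : f ≠ 0 := hfm.ne_zero
  by_contra hred
  have hnu : ¬ IsUnit f := by
    intro hu
    have := natDegree_eq_zero_of_isUnit hu
    omega
  rw [irreducible_iff, not_and_or] at hred
  rcases hred with h | h
  · exact h hnu
  · push_neg at h
    obtain ⟨p, q, hpq, hpu, hqu⟩ := h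
    have hp0 : p ≠ 0 := fun h0 => hf0 (by rw [hpq, h0, zero_mul])
    have hq0 : q ≠ 0 := fun h0 => hf0 (by rw [hpq, h0, mul_zero])
    have hdeg : p.natDegree + q.natDegree = 6 := by
      rw [← hfd, hpq, natDegree_mul hp0 hq0]
    have hpd : 1 ≤ p.natDegree := by
      by_contra hc
      exact hpu (isUnit_iff_degree_eq_zero.mpr (by
        rw [degree_eq_natDegree hp0]; norm_cast; omega))
    have hqd : 1 ≤ q.natDegree := by
      by_contra hc
      exact hqu (isUnit_iff_degree_eq_zero.mpr (by
        rw [degree_eq_natDegree hq0]; norm_cast; omega))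
    -- choose factor of degree ≤ 3
    obtain ⟨s, hs0, hsu, hsdvd, hsd⟩ :
        ∃ s : Polynomial (ZMod 3), s ≠ 0 ∧ ¬ IsUnit s ∧ s ∣ f ∧ s.natDegree ≤ 3 := by
      rcases le_or_gt p.natDegree 3 with hle | hlt
      · exact ⟨p, hp0, hpu, ⟨q, hpq⟩, hle⟩
      · exact ⟨q, hq0, hqu, ⟨p, by rw [hpq, mul_comm]⟩, by omega⟩
    obtain ⟨g, hgirr, hgdvd⟩ := WfDvdMonoid.exists_irreducible_factor hsu hs0
    have hgf : g ∣ f := hgdvd.trans hsdvd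
    have hg0 : g ≠ 0 := hgirr.ne_zero
    have hgd3 : g.natDegree ≤ 3 := le_trans (natDegree_le_of_dvd hgdvd hs0) hsd
    have hgd1 : 1 ≤ g.natDegree := by
      by_contra hc
      exact hgirr.not_isUnit (isUnit_iff_degree_eq_zero.mpr (by
        rw [degree_eq_natDegree hg0]; norm_cast; omega))
    -- pass to the field K = AdjoinRoot g
    haveI : Fact (Irreducible g) := ⟨hgirr⟩
    set K := AdjoinRoot g
    set α : K := AdjoinRoot.root g with hα
    have haevalg : (aeval α) g = 0 := by rw [AdjoinRoot.aeval_eq, AdjoinRoot.mk_self]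
    have haevalf : (aeval α) f = 0 := by
      obtain ⟨t, ht⟩ := hgf
      rw [ht, map_mul, haevalg, zero_mul]
    have hα7 : α ^ 7 = 1 := by
      have hc : f * (X - 1) = X ^ 7 - 1 := cyclotomic_prime_mul_X_sub_one (ZMod 3) 7
      have := congrArg (aeval α) hc
      simp only [map_mul, haevalf, zero_mul, map_sub, map_pow, aeval_X, map_one] at this
      exact sub_eq_zero.mp this.symm
    have hα0 : α ≠ 0 := by
      intro h0
      rw [h0, zero_pow (by norm_num)] at hα7
      exact zero_ne_one hα7
    have hα1 : α ≠ 1 := by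
      intro h1
      rw [h1] at haevalf
      have hc := congrArg (aeval (1:K)) (cyclotomic_prime (ZMod 3) 7)
      rw [haevalf, map_sum] at hc
      simp only [aeval_X_pow, one_pow, Finset.sum_const, Finset.card_range, nsmul_eq_mul,
        mul_one] at hc
      have : ((7:ℕ):K) = 0 := hc.symm
      rw [show ((7:ℕ):K) = algebraMap (ZMod 3) K ((7:ℕ):ZMod 3) from (map_natCast (algebraMap (ZMod 3) K) 7).symm] at this
      rw [show ((7:ℕ):ZMod 3) = 1 by decide, map_one] at this
      exact one_ne_zero this
    have horder : orderOf α = 7 := orderOf_eq_prime hα7 hα1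
    -- cardinality of K
    let b := AdjoinRoot.powerBasis hg0
    haveI : Fintype K := Module.fintypeOfFintype b.basis
    have hcard : Fintype.card K = 3 ^ g.natDegree := by
      rw [Module.card_fintype b.basis, ZMod.card, Fintype.card_fin,
        AdjoinRoot.powerBasis_dim]
    have hpow : α ^ (Fintype.card K - 1) = 1 := FiniteField.pow_card_sub_one_eq_one α hα0
    have hdvd : 7 ∣ Fintype.card K - 1 := horder ▸ orderOf_dvd_of_pow_eq_one hpow
    rw [hcard] at hdvd
    interval_cases h : g.natDegree <;> revert hdvd <;> decide

instance factirr : Fact (Irreducible (cyclotomic 7 (ZMod 3))) := ⟨cyclo73_irr⟩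

noncomputable def psi : Oring →+* Fq :=
  AdjoinRoot.lift (Int.castRingHom Fq) (AdjoinRoot.root (cyclotomic 7 (ZMod 3))) (by
    have he : (Int.castRingHom Fq) =
        (AdjoinRoot.of (cyclotomic 7 (ZMod 3))).comp (Int.castRingHom (ZMod 3)) :=
      Subsingleton.elim _ _
    rw [he, ← eval₂_map, map_cyclotomic]
    exact AdjoinRoot.eval₂_root _)

lemma three_Fq : (3 : Fq) = 0 := by
  have : (3 : Fq) = (AdjoinRoot.of (cyclotomic 7 (ZMod 3))) (3 : ZMod 3) := (map_ofNat _ 3).symm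
  rw [this, show (3 : ZMod 3) = 0 by decide, map_zero]

lemma psi_ker (x : Oring) (hx : psi x = 0) : (3 : Oring) ∣ x := by
  obtain ⟨f, rfl⟩ := AdjoinRoot.mk_surjective x
  rw [psi, AdjoinRoot.lift_mk] at hx
  have hx' : AdjoinRoot.mk (cyclotomic 7 (ZMod 3)) (f.map (Int.castRingHom (ZMod 3))) = 0 := by
    rw [← AdjoinRoot.aeval_eq, aeval_def, AdjoinRoot.algebraMap_eq, eval₂_map, ← hx]
    congr 1
  rw [AdjoinRoot.mk_eq_zero] at hx'
  obtain ⟨q, hq⟩ := hx'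
  obtain ⟨q', rfl⟩ := Polynomial.map_surjective (Int.castRingHom (ZMod 3))
    ZMod.intCast_surjective q
  have h3 : C (3:ℤ) ∣ f - cyclotomic 7 ℤ * q' := by
    rw [C_dvd_iff_dvd_coeff]
    intro n
    have hmap : (f - cyclotomic 7 ℤ * q').map (Int.castRingHom (ZMod 3)) = 0 := by
      rw [Polynomial.map_sub, Polynomial.map_mul, map_cyclotomic, hq, sub_self]
    have hco := congrArg (fun p => Polynomial.coeff p n) hmap
    simp only [Polynomial.coeff_map, Polynomial.coeff_zero] at hco
    have : ((3:ℤ)) ∣ (f - cyclotomic 7 ℤ * q').coeff n := by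
      have := (ZMod.intCast_zmod_eq_zero_iff_dvd _ 3).mp hco
      exact_mod_cast this
    exact this
  obtain ⟨h, hh⟩ := h3
  have hfeq : f = cyclotomic 7 ℤ * q' + C 3 * h := by linear_combination hh
  rw [hfeq, map_add, map_mul, map_mul, AdjoinRoot.mk_self, zero_mul, zero_add, AdjoinRoot.mk_C,
    show (AdjoinRoot.of (cyclotomic 7 ℤ)) (3:ℤ) = (3:Oring) from map_ofNat _ 3]
  exact Dvd.intro _ rfl

lemma psi_three : psi (3 : Oring) = 0 := by rw [map_ofNat]; exact three_Fq

lemma three_prime_O {x y : Oring} (h : (3:Oring) ∣ x * y) : (3:Oring) ∣ x ∨ (3:Oring) ∣ y := by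
  obtain ⟨t, ht⟩ := h
  have h0 : psi x * psi y = 0 := by
    rw [← map_mul, ht, map_mul, psi_three, zero_mul]
  rcases mul_eq_zero.mp h0 with h | h
  · exact Or.inl (psi_ker _ h)
  · exact Or.inr (psi_ker _ h)

lemma cancel_pow3 {a : ℕ} {s t : Oring} (h : (3:Oring)^a * s = 3^a * t) : s = t := by
  apply phi_injective
  have h2 := congrArg phi h
  simp only [map_mul, map_pow, map_ofNat] at h2
  exact mul_left_cancel₀ (pow_ne_zero _ (by norm_num : (3:ℂ) ≠ 0)) h2

lemma cancel_3 {s t : Oring} (h : (3:Oring) * s = 3 * t) : s = t := by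
  have := cancel_pow3 (a := 1) (s := s) (t := t) (by rw [pow_one]; exact h)
  exact this

lemma decomp3 : ∀ (n : ℕ) (x y u : Oring), ¬ (3:Oring) ∣ u → x * y = 3^n * u →
    ∃ a b x₀ y₀, a + b = n ∧ x = 3^a * x₀ ∧ y = 3^b * y₀ ∧
      ¬ (3:Oring) ∣ x₀ ∧ ¬ (3:Oring) ∣ y₀ := by
  intro n
  induction n with
  | zero =>
    intro x y u hu h
    rw [pow_zero, one_mul] at h
    refine ⟨0, 0, x, y, rfl, by rw [pow_zero, one_mul], by rw [pow_zero, one_mul], ?_, ?_⟩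
    · rintro ⟨t, rfl⟩; exact hu ⟨t * y, by rw [← h]; ring⟩
    · rintro ⟨t, rfl⟩; exact hu ⟨x * t, by rw [← h]; ring⟩
  | succ n ih =>
    intro x y u hu h
    have h3 : (3:Oring) ∣ x * y := ⟨3^n * u, by rw [h, pow_succ]; ring⟩
    rcases three_prime_O h3 with ⟨x', rfl⟩ | ⟨y', rfl⟩
    · have hc : x' * y = 3^n * u := by
        apply cancel_3
        rw [pow_succ'] at h
        linear_combination h
      obtain ⟨a, b, x₀, y₀, hab, hx, hy, h1, h2⟩ := ih x' y u hu hc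
      exact ⟨a+1, b, x₀, y₀, by omega, by rw [hx, pow_succ]; ring, hy, h1, h2⟩
    · have hc : x * y' = 3^n * u := by
        apply cancel_3
        rw [pow_succ'] at h
        linear_combination h
      obtain ⟨a, b, x₀, y₀, hab, hx, hy, h1, h2⟩ := ih x y' u hu hc
      exact ⟨a, b+1, x₀, y₀, by omega, hx, by rw [hy, pow_succ]; ring, h1, h2⟩

lemma no_D (D : Oring) : D * sig D ≠ 3^21 * 7^21 := by
  intro h
  have hu : ¬ (3:Oring) ∣ (7:Oring)^21 := by
    rintro ⟨t, ht⟩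
    have h2 := congrArg psi ht
    rw [map_pow, map_mul, psi_three, zero_mul, map_ofNat] at h2
    rw [show (7:Fq) = 3 * 2 + 1 by norm_num, three_Fq, zero_mul, zero_add, one_pow] at h2
    exact one_ne_zero h2
  obtain ⟨a, b, x₀, y₀, hab, hx, hy, hx0, hy0⟩ := decomp3 21 D (sig D) _ hu h
  have hyσ : sig D = 3^a * sig x₀ := by rw [hx, map_mul, map_pow, map_ofNat]
  have hσx0 : ¬ (3:Oring) ∣ sig x₀ := by
    rintro ⟨t, ht⟩
    apply hx0
    refine ⟨sig t, ?_⟩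
    have h2 := congrArg sig ht
    rw [sig_sig, map_mul, map_ofNat] at h2
    exact h2
  have heq : (3:Oring)^b * y₀ = 3^a * sig x₀ := by rw [← hy, hyσ]
  have hab2 : a = b := by
    rcases lt_trichotomy a b with hlt | heqq | hlt
    · exfalso; apply hσx0
      have h2 : (3:Oring)^a * (3^(b-a) * y₀) = 3^a * sig x₀ := by
        rw [← mul_assoc, ← pow_add, Nat.add_sub_cancel' hlt.le]; exact heq
      have h3 := cancel_pow3 h2
      obtain ⟨k, hk⟩ : ∃ k, b - a = k + 1 := ⟨b - a - 1, by omega⟩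
      exact ⟨3^k * y₀, by rw [← h3, hk, pow_succ]; ring⟩
    · exact heqq
    · exfalso; apply hy0
      have h2 : (3:Oring)^b * (3^(a-b) * sig x₀) = 3^b * y₀ := by
        rw [← mul_assoc, ← pow_add, Nat.add_sub_cancel' hlt.le]; exact heq.symm
      have h3 := cancel_pow3 h2
      obtain ⟨k, hk⟩ : ∃ k, a - b = k + 1 := ⟨a - b - 1, by omega⟩
      exact ⟨3^k * sig x₀, by rw [← h3, hk, pow_succ]; ring⟩
  omega

lemma zeta7_pow : zeta7 ^ 7 = 1 := zeta7_prim.pow_eq_one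

lemma zeta7_star : (starRingEnd ℂ) zeta7 = zeta7 ^ 6 := by
  have h2 : (starRingEnd ℂ) zeta7 * zeta7 = 1 := by
    have hc : (starRingEnd ℂ) zeta7 = Complex.exp (-(2 * (Real.pi:ℂ) * Complex.I / 7)) := by
      rw [zeta7, ← Complex.exp_conj]
      congr 1
      simp only [map_div₀, map_mul, Complex.conj_I, Complex.conj_ofReal, map_ofNat]
      ring
    rw [hc, zeta7, ← Complex.exp_add, neg_add_cancel, Complex.exp_zero]
  have h1 : zeta7 * zeta7 ^ 6 = 1 := by rw [← pow_succ']; exact zeta7_pow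
  rw [eq_inv_of_mul_eq_one_left h2]
  exact (eq_inv_of_mul_eq_one_left (by rw [mul_comm]; exact h1)).symm

lemma chr_eq_s16 (a x : Fin 3 → ZMod 7) :
    chr 7 a x = zeta7 ^ (ZMod.val (∑ i, x i * a i)) := by
  rw [chr, zeta7, ← Complex.exp_nat_mul]
  congr 1
  push_cast
  ring


/-- There is no spectral set of size 21 in `𝔽_7^3`. -/
theorem no_spectral_of_card_21 (E : Finset (Fin 3 → ZMod 7)) (hE : E.card = 21) :
    ¬ IsSpectral 7 E := by
  rintro ⟨A, horth, hspan, hind⟩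
  classical
  -- step 1 : A.card = 21
  have hAcard : A.card = 21 := by
    set g : ↥A → (↥E → ℂ) := fun a x => chr 7 a.1 x.1 with hg
    have hli : LinearIndependent ℂ g := by
      rw [Fintype.linearIndependent_iff]
      intro c hc
      refine hind c (fun x => ?_)
      have h2 := congrFun hc x
      simpa [g, Finset.sum_apply] using h2
    have h1 : A.card ≤ 21 := by
      have h2 := hli.fintype_card_le_finrank
      simpa [Module.finrank_pi, Fintype.card_coe, hE] using h2
    have hsp : Submodule.span ℂ (Set.range g) = ⊤ := by
      rw [eq_top_iff]
      intro f _
      obtain ⟨c, hc⟩ := hspan f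
      have hfe : f = ∑ a : ↥A, c a • g a := by
        funext x
        simpa [g, Finset.sum_apply] using hc x
      rw [hfe]
      exact Submodule.sum_mem _ fun a _ =>
        Submodule.smul_mem _ _ (Submodule.subset_span ⟨a, rfl⟩)
    have h2 : 21 ≤ A.card := by
      have h3 := finrank_le_of_span_eq_top hsp
      simpa [Module.finrank_pi, Fintype.card_coe, hE] using h3
    omega
  have hA21 : Fintype.card ↥A = 21 := by rw [Fintype.card_coe, hAcard]
  have hE21 : Fintype.card ↥E = 21 := by rw [Fintype.card_coe, hE]
  let e : ↥A ≃ ↥E := Fintype.equivOfCardEq (by rw [hA21, hE21])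
  -- step 2 : matrices
  let M : Matrix ↥A ↥A ℂ := Matrix.of fun a b => chr 7 a.1 (e b).1
  let Mc : Matrix ↥A ↥A ℂ := Matrix.of fun a b => (starRingEnd ℂ) (chr 7 a.1 (e b).1)
  have hdiagterm : ∀ (a : Fin 3 → ZMod 7) (x : Fin 3 → ZMod 7),
      chr 7 a x * (starRingEnd ℂ) (chr 7 a x) = 1 := by
    intro a x
    rw [chr_eq_s16, map_pow, zeta7_star, ← mul_pow, ← pow_succ', zeta7_pow, one_pow]
  have hMM : M * Mc.transpose = (21:ℂ) • 1 := by
    ext a a'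
    rw [Matrix.mul_apply]
    simp only [M, Mc, Matrix.transpose_apply, Matrix.of_apply]
    rw [Equiv.sum_comp e (fun x : ↥E => chr 7 a.1 x.1 * (starRingEnd ℂ) (chr 7 a'.1 x.1)),
      Finset.sum_coe_sort E (fun x => chr 7 a.1 x * (starRingEnd ℂ) (chr 7 a'.1 x))]
    by_cases h : a = a'
    · subst h
      rw [Finset.sum_congr rfl (fun x _ => hdiagterm a.1 x), Finset.sum_const, hE]
      simp [Matrix.smul_apply, Matrix.one_apply]
    · rw [horth a.1 a.2 a'.1 a'.2 (fun hh => h (Subtype.ext hh))]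
      simp [Matrix.smul_apply, Matrix.one_apply, h]
  -- step 3 : integral matrix
  let N : Matrix ↥A ↥A Oring := Matrix.of fun a b =>
    rr ^ (ZMod.val (∑ i, (e b).1 i * a.1 i))
  have hNphi : N.map phi = M := by
    ext a b
    simp only [Matrix.map_apply, N, M, Matrix.of_apply, map_pow, phi_root]
    rw [chr_eq_s16]
  have hNsig : (N.map sig).map phi = Mc := by
    ext a b
    simp only [Matrix.map_apply, N, Mc, Matrix.of_apply, map_pow, sig_root, phi_root]
    rw [chr_eq_s16, map_pow, zeta7_star]
  -- step 4 : determinant identity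
  have hkey : N.det * sig N.det = 3^21 * 7^21 := by
    apply phi_injective
    simp only [map_mul, RingHom.map_det, RingHom.mapMatrix_apply]
    rw [hNphi, hNsig]
    have hds : M.det * Mc.det = (21:ℂ)^21 := by
      have h1 : (M * Mc.transpose).det = M.det * Mc.det := by
        rw [Matrix.det_mul, Matrix.det_transpose]
      rw [← h1, hMM, Matrix.det_smul, Matrix.det_one, hA21, mul_one]
    rw [hds]
    simp only [map_mul, map_pow, map_ofNat]
    norm_num
  exact no_D N.det hkey
end
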